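/- arXiv:2209.07772 — 2 statements merged into one kernel-verified Lean document; each statement's English description precedes it below -/
import Mathlib

section
/- Fix any b-coloring of the constructed graph H with k colors, and define an orientation of G as follows: for each edge e = uv of G, orient e towards u if x_{e,u} is a b-vertex, and towards v if x_{e,v} is a b-vertex (exactly one of the two occurs). Then for every vertex v of G, the total weight of edges oriented towards v in this orientation equals (1/2)W_v; in particular, this orientation is circulating. -/
open Finset

/-- `a` is a b-vertex of the coloring `c`: it has a neighbor in every color class
other than its own. -/
def IsBVertex {VH : Type*} (H : SimpleGraph VH) {k : ℕ} (c : VH → Fin k) (a : VH) : Prop :=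
  ∀ col : Fin k, col ≠ c a → ∃ b : VH, H.Adj a b ∧ c b = col

/-- `c` is a b-coloring of `H` with `k` colors: a proper coloring using all `k` colors
in which every color class contains a b-vertex. -/
def IsBColoring {VH : Type*} (H : SimpleGraph VH) (k : ℕ) (c : VH → Fin k) : Prop :=
  (∀ ⦃a b : VH⦄, H.Adj a b → c a ≠ c b) ∧ Function.Surjective c ∧
    ∀ col : Fin k, ∃ a : VH, c a = col ∧ IsBVertex H c a

variable {V : Type*} [Fintype V] [DecidableEq V]

/-- `W`, the total weight of all edges. -/
def totW (G : SimpleGraph V) [DecidableRel G.Adj] (wt : Sym2 V → ℕ) : ℕ :=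
  ∑ e ∈ G.edgeFinset, wt e

/-- `W_v`, the total weight of the edges incident with `v`. -/
def vertW (G : SimpleGraph V) [DecidableRel G.Adj] (wt : Sym2 V → ℕ) (v : V) : ℕ :=
  ∑ e ∈ G.edgeFinset.filter (fun e => v ∈ e), wt e

/-- `k = 2W + 3m + n + 2`. -/
def numColors (G : SimpleGraph V) [DecidableRel G.Adj] (wt : Sym2 V → ℕ) : ℕ :=
  2 * totW G wt + 3 * G.edgeFinset.card + Fintype.card V + 2

/-- An orientation of `(G, wt)` (given by choosing a head `o e ∈ e` for every edge `e`)
is circulating if, at every vertex, the entering weight equals the leaving weight. -/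
def IsCirculating (G : SimpleGraph V) [DecidableRel G.Adj] (wt : Sym2 V → ℕ)
    (o : Sym2 V → V) : Prop :=
  (∀ e ∈ G.edgeFinset, o e ∈ e) ∧
    ∀ v : V,
      ∑ e ∈ G.edgeFinset.filter (fun e => v ∈ e ∧ o e = v), wt e =
        ∑ e ∈ G.edgeFinset.filter (fun e => v ∈ e ∧ o e ≠ v), wt e

/-- The data of the construction of the graph `H` from `(G, wt)`. -/
structure GadgetData (V : Type*) [Fintype V] [DecidableEq V]
    (G : SimpleGraph V) [DecidableRel G.Adj] (wt : Sym2 V → ℕ) where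
  /-- the vertex type of `H` -/
  VH : Type*
  fintypeVH : Fintype VH
  decEqVH : DecidableEq VH
  /-- the graph `H` -/
  H : SimpleGraph VH
  decAdj : DecidableRel H.Adj
  /-- the center `s*` of the superstar -/
  sstar : VH
  /-- the leaves of the superstar -/
  Sleaves : Finset VH
  /-- the centers of the anonymous stars -/
  Acenters : Finset VH
  /-- the leaves of each anonymous star -/
  Aleaves : VH → Finset VH
  /-- the sets `L_{e,v}` (subsets of the superstar leaves) -/
  L : Sym2 V → V → Finset VH
  /-- the copy of a vertex of `G` inside `H` -/
  orig : V → VH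
  /-- the sets `P_v` -/
  P : V → Finset VH
  /-- the vertices `x_{e,v}` -/
  x : Sym2 V → V → VH
  /-- the sets `Y_e` -/
  Y : Sym2 V → Finset VH
  /-- the sets `Z_e` -/
  Z : Sym2 V → Finset VH
  /-- the vertices `q_{e,1}, q_{e,2}` -/
  q : Sym2 V → Fin 2 → VH

namespace GadgetData

variable {G : SimpleGraph V} [DecidableRel G.Adj] {wt : Sym2 V → ℕ}

/-- The set `X = {x_{e,v} : v ∈ e ∈ E(G)}`. -/
def Xset (g : GadgetData V G wt) : Finset g.VH :=
  letI := g.fintypeVH; letI := g.decEqVH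
  G.edgeFinset.biUnion fun e => (Finset.univ.filter fun v => v ∈ e).image (g.x e)

/-- The set `Q = {q_{e,1}, q_{e,2} : e ∈ E(G)}`. -/
def Qset (g : GadgetData V G wt) : Finset g.VH :=
  letI := g.decEqVH
  G.edgeFinset.biUnion fun e => {g.q e 0, g.q e 1}

/-- The parts into which the vertex set of `H` is partitioned. -/
def parts (g : GadgetData V G wt) : List (Finset g.VH) :=
  letI := g.fintypeVH; letI := g.decEqVH
  [{g.sstar}, g.Sleaves, g.Acenters, g.Acenters.biUnion g.Aleaves,
    Finset.univ.image g.orig, Finset.univ.biUnion g.P,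
    g.Xset, G.edgeFinset.biUnion g.Y, G.edgeFinset.biUnion g.Z, g.Qset]

/-- One directional specification of the adjacencies of `H`. -/
def AdjSpec (g : GadgetData V G wt) (a b : g.VH) : Prop :=
  (a = g.sstar ∧ b ∈ g.Sleaves) ∨
  (∃ s ∈ g.Acenters, a = s ∧ b ∈ g.Aleaves s) ∨
  (∃ v : V, a = g.orig v ∧ b ∈ g.P v) ∨
  (∃ e ∈ G.edgeFinset, ∃ v : V, v ∈ e ∧ a = g.orig v ∧ (b ∈ g.L e v ∨ b ∈ g.Y e)) ∨
  (∃ e ∈ G.edgeFinset, ∃ v : V, v ∈ e ∧ a = g.x e v ∧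
    (b ∈ g.Y e ∨ b ∈ g.Z e ∨ b ∈ g.L e v)) ∨
  (∃ e ∈ G.edgeFinset, a = g.q e 0 ∧ b = g.q e 1) ∨
  (∃ e ∈ G.edgeFinset, ∃ h : Fin 2, a = g.q e h ∧
    (b ∈ g.Z e ∨ (∃ v : V, v ∈ e ∧ b ∈ g.L e v) ∨ (∃ v : V, v ∈ e ∧ b = g.x e v)))

/-- Degree in `H`. -/
def deg (g : GadgetData V G wt) (a : g.VH) : ℕ :=
  letI := g.fintypeVH; letI := g.decEqVH; letI := g.decAdj
  g.H.degree a

/-- The set `{s*} ∪ V(G) ∪ Q ∪ A ∪ X`. -/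
def bigSet (g : GadgetData V G wt) : Finset g.VH :=
  letI := g.fintypeVH; letI := g.decEqVH
  {g.sstar} ∪ Finset.univ.image g.orig ∪ g.Qset ∪ g.Acenters ∪ g.Xset

end GadgetData

/-- The construction of the graph `H` from `(G, wt)`: the data together with all the
requirements (sizes of the parts, their disjointness, and the adjacency relation). -/
structure Gadget (V : Type*) [Fintype V] [DecidableEq V]
    (G : SimpleGraph V) [DecidableRel G.Adj] (wt : Sym2 V → ℕ)
    extends GadgetData V G wt where
  card_Sleaves : Sleaves.card = numColors G wt - 1
  card_Acenters : Acenters.card = 2 * totW G wt + 1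
  card_Aleaves : ∀ s ∈ Acenters, (Aleaves s).card = numColors G wt - 1
  Aleaves_disjoint : ∀ s ∈ Acenters, ∀ s' ∈ Acenters, s ≠ s' →
    Disjoint (Aleaves s) (Aleaves s')
  L_subset : ∀ e ∈ G.edgeFinset, ∀ v ∈ e, L e v ⊆ Sleaves
  card_L : ∀ e ∈ G.edgeFinset, ∀ v ∈ e, (L e v).card = wt e
  L_disjoint : ∀ e ∈ G.edgeFinset, ∀ v ∈ e, ∀ e' ∈ G.edgeFinset, ∀ v' ∈ e',
    (e, v) ≠ (e', v') → Disjoint (L e v) (L e' v')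
  card_P : ∀ v : V, 2 * (P v).card + 3 * vertW G wt v + 2 = 2 * numColors G wt
  card_Y : ∀ e ∈ G.edgeFinset, (Y e).card = wt e
  card_Z : ∀ e ∈ G.edgeFinset, (Z e).card + 2 * wt e + 3 = numColors G wt
  orig_inj : Function.Injective orig
  P_disjoint : ∀ v v' : V, v ≠ v' → Disjoint (P v) (P v')
  x_inj : ∀ e ∈ G.edgeFinset, ∀ v ∈ e, ∀ e' ∈ G.edgeFinset, ∀ v' ∈ e',
    x e v = x e' v' → (e, v) = (e', v')
  Y_disjoint : ∀ e ∈ G.edgeFinset, ∀ e' ∈ G.edgeFinset, e ≠ e' → Disjoint (Y e) (Y e')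
  Z_disjoint : ∀ e ∈ G.edgeFinset, ∀ e' ∈ G.edgeFinset, e ≠ e' → Disjoint (Z e) (Z e')
  q_inj : ∀ e ∈ G.edgeFinset, ∀ h : Fin 2, ∀ e' ∈ G.edgeFinset, ∀ h' : Fin 2,
    q e h = q e' h' → (e, h) = (e', h')
  parts_disjoint : toGadgetData.parts.Pairwise Disjoint
  parts_cover : ∀ a : VH, ∃ p ∈ toGadgetData.parts, a ∈ p
  adj_iff : ∀ a b : VH, H.Adj a b ↔
    toGadgetData.AdjSpec a b ∨ toGadgetData.AdjSpec b a

section Aux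

open Finset

variable {V : Type*} [Fintype V] [DecidableEq V] {G : SimpleGraph V} [DecidableRel G.Adj]
  {wt : Sym2 V → ℕ}

instance (g : GadgetData V G wt) : Fintype g.VH := g.fintypeVH
instance (g : GadgetData V G wt) : DecidableEq g.VH := g.decEqVH
instance (g : GadgetData V G wt) : DecidableRel g.H.Adj := g.decAdj

lemma gparts (g : Gadget V G wt) :
    List.Pairwise Disjoint [({g.sstar} : Finset g.VH), g.Sleaves, g.Acenters,
      g.Acenters.biUnion g.Aleaves, Finset.univ.image g.orig, Finset.univ.biUnion g.P,
      g.toGadgetData.Xset, G.edgeFinset.biUnion g.Y, G.edgeFinset.biUnion g.Z,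
      g.toGadgetData.Qset] := g.parts_disjoint

lemma d01 (g : Gadget V G wt) : Disjoint ({g.sstar} : Finset g.VH) g.Sleaves := by
  exact List.rel_of_pairwise_cons ((gparts g)) (by simp)

lemma d02 (g : Gadget V G wt) : Disjoint ({g.sstar} : Finset g.VH) g.Acenters := by
  exact List.rel_of_pairwise_cons ((gparts g)) (by simp)

lemma d03 (g : Gadget V G wt) : Disjoint ({g.sstar} : Finset g.VH) (g.Acenters.biUnion g.Aleaves) := by
  exact List.rel_of_pairwise_cons ((gparts g)) (by simp)

lemma d04 (g : Gadget V G wt) : Disjoint ({g.sstar} : Finset g.VH) (Finset.univ.image g.orig) := by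
  exact List.rel_of_pairwise_cons ((gparts g)) (by simp)

lemma d05 (g : Gadget V G wt) : Disjoint ({g.sstar} : Finset g.VH) (Finset.univ.biUnion g.P) := by
  exact List.rel_of_pairwise_cons ((gparts g)) (by simp)

lemma d06 (g : Gadget V G wt) : Disjoint ({g.sstar} : Finset g.VH) g.toGadgetData.Xset := by
  exact List.rel_of_pairwise_cons ((gparts g)) (by simp)

lemma d07 (g : Gadget V G wt) : Disjoint ({g.sstar} : Finset g.VH) (G.edgeFinset.biUnion g.Y) := by
  exact List.rel_of_pairwise_cons ((gparts g)) (by simp)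

lemma d08 (g : Gadget V G wt) : Disjoint ({g.sstar} : Finset g.VH) (G.edgeFinset.biUnion g.Z) := by
  exact List.rel_of_pairwise_cons ((gparts g)) (by simp)

lemma d09 (g : Gadget V G wt) : Disjoint ({g.sstar} : Finset g.VH) g.toGadgetData.Qset := by
  exact List.rel_of_pairwise_cons ((gparts g)) (by simp)

lemma d12 (g : Gadget V G wt) : Disjoint g.Sleaves g.Acenters := by
  exact List.rel_of_pairwise_cons ((gparts g).tail) (by simp)

lemma d13 (g : Gadget V G wt) : Disjoint g.Sleaves (g.Acenters.biUnion g.Aleaves) := by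
  exact List.rel_of_pairwise_cons ((gparts g).tail) (by simp)

lemma d14 (g : Gadget V G wt) : Disjoint g.Sleaves (Finset.univ.image g.orig) := by
  exact List.rel_of_pairwise_cons ((gparts g).tail) (by simp)

lemma d15 (g : Gadget V G wt) : Disjoint g.Sleaves (Finset.univ.biUnion g.P) := by
  exact List.rel_of_pairwise_cons ((gparts g).tail) (by simp)

lemma d16 (g : Gadget V G wt) : Disjoint g.Sleaves g.toGadgetData.Xset := by
  exact List.rel_of_pairwise_cons ((gparts g).tail) (by simp)

lemma d17 (g : Gadget V G wt) : Disjoint g.Sleaves (G.edgeFinset.biUnion g.Y) := by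
  exact List.rel_of_pairwise_cons ((gparts g).tail) (by simp)

lemma d18 (g : Gadget V G wt) : Disjoint g.Sleaves (G.edgeFinset.biUnion g.Z) := by
  exact List.rel_of_pairwise_cons ((gparts g).tail) (by simp)

lemma d19 (g : Gadget V G wt) : Disjoint g.Sleaves g.toGadgetData.Qset := by
  exact List.rel_of_pairwise_cons ((gparts g).tail) (by simp)

lemma d23 (g : Gadget V G wt) : Disjoint g.Acenters (g.Acenters.biUnion g.Aleaves) := by
  exact List.rel_of_pairwise_cons ((gparts g).tail.tail) (by simp)

lemma d24 (g : Gadget V G wt) : Disjoint g.Acenters (Finset.univ.image g.orig) := by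
  exact List.rel_of_pairwise_cons ((gparts g).tail.tail) (by simp)

lemma d25 (g : Gadget V G wt) : Disjoint g.Acenters (Finset.univ.biUnion g.P) := by
  exact List.rel_of_pairwise_cons ((gparts g).tail.tail) (by simp)

lemma d26 (g : Gadget V G wt) : Disjoint g.Acenters g.toGadgetData.Xset := by
  exact List.rel_of_pairwise_cons ((gparts g).tail.tail) (by simp)

lemma d27 (g : Gadget V G wt) : Disjoint g.Acenters (G.edgeFinset.biUnion g.Y) := by
  exact List.rel_of_pairwise_cons ((gparts g).tail.tail) (by simp)

lemma d28 (g : Gadget V G wt) : Disjoint g.Acenters (G.edgeFinset.biUnion g.Z) := by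
  exact List.rel_of_pairwise_cons ((gparts g).tail.tail) (by simp)

lemma d29 (g : Gadget V G wt) : Disjoint g.Acenters g.toGadgetData.Qset := by
  exact List.rel_of_pairwise_cons ((gparts g).tail.tail) (by simp)

lemma d34 (g : Gadget V G wt) : Disjoint (g.Acenters.biUnion g.Aleaves) (Finset.univ.image g.orig) := by
  exact List.rel_of_pairwise_cons ((gparts g).tail.tail.tail) (by simp)

lemma d35 (g : Gadget V G wt) : Disjoint (g.Acenters.biUnion g.Aleaves) (Finset.univ.biUnion g.P) := by
  exact List.rel_of_pairwise_cons ((gparts g).tail.tail.tail) (by simp)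

lemma d36 (g : Gadget V G wt) : Disjoint (g.Acenters.biUnion g.Aleaves) g.toGadgetData.Xset := by
  exact List.rel_of_pairwise_cons ((gparts g).tail.tail.tail) (by simp)

lemma d37 (g : Gadget V G wt) : Disjoint (g.Acenters.biUnion g.Aleaves) (G.edgeFinset.biUnion g.Y) := by
  exact List.rel_of_pairwise_cons ((gparts g).tail.tail.tail) (by simp)

lemma d38 (g : Gadget V G wt) : Disjoint (g.Acenters.biUnion g.Aleaves) (G.edgeFinset.biUnion g.Z) := by
  exact List.rel_of_pairwise_cons ((gparts g).tail.tail.tail) (by simp)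

lemma d39 (g : Gadget V G wt) : Disjoint (g.Acenters.biUnion g.Aleaves) g.toGadgetData.Qset := by
  exact List.rel_of_pairwise_cons ((gparts g).tail.tail.tail) (by simp)

lemma d45 (g : Gadget V G wt) : Disjoint (Finset.univ.image g.orig) (Finset.univ.biUnion g.P) := by
  exact List.rel_of_pairwise_cons ((gparts g).tail.tail.tail.tail) (by simp)

lemma d46 (g : Gadget V G wt) : Disjoint (Finset.univ.image g.orig) g.toGadgetData.Xset := by
  exact List.rel_of_pairwise_cons ((gparts g).tail.tail.tail.tail) (by simp)

lemma d47 (g : Gadget V G wt) : Disjoint (Finset.univ.image g.orig) (G.edgeFinset.biUnion g.Y) := by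
  exact List.rel_of_pairwise_cons ((gparts g).tail.tail.tail.tail) (by simp)

lemma d48 (g : Gadget V G wt) : Disjoint (Finset.univ.image g.orig) (G.edgeFinset.biUnion g.Z) := by
  exact List.rel_of_pairwise_cons ((gparts g).tail.tail.tail.tail) (by simp)

lemma d49 (g : Gadget V G wt) : Disjoint (Finset.univ.image g.orig) g.toGadgetData.Qset := by
  exact List.rel_of_pairwise_cons ((gparts g).tail.tail.tail.tail) (by simp)

lemma d56 (g : Gadget V G wt) : Disjoint (Finset.univ.biUnion g.P) g.toGadgetData.Xset := by
  exact List.rel_of_pairwise_cons ((gparts g).tail.tail.tail.tail.tail) (by simp)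

lemma d57 (g : Gadget V G wt) : Disjoint (Finset.univ.biUnion g.P) (G.edgeFinset.biUnion g.Y) := by
  exact List.rel_of_pairwise_cons ((gparts g).tail.tail.tail.tail.tail) (by simp)

lemma d58 (g : Gadget V G wt) : Disjoint (Finset.univ.biUnion g.P) (G.edgeFinset.biUnion g.Z) := by
  exact List.rel_of_pairwise_cons ((gparts g).tail.tail.tail.tail.tail) (by simp)

lemma d59 (g : Gadget V G wt) : Disjoint (Finset.univ.biUnion g.P) g.toGadgetData.Qset := by
  exact List.rel_of_pairwise_cons ((gparts g).tail.tail.tail.tail.tail) (by simp)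

lemma d67 (g : Gadget V G wt) : Disjoint g.toGadgetData.Xset (G.edgeFinset.biUnion g.Y) := by
  exact List.rel_of_pairwise_cons ((gparts g).tail.tail.tail.tail.tail.tail) (by simp)

lemma d68 (g : Gadget V G wt) : Disjoint g.toGadgetData.Xset (G.edgeFinset.biUnion g.Z) := by
  exact List.rel_of_pairwise_cons ((gparts g).tail.tail.tail.tail.tail.tail) (by simp)

lemma d69 (g : Gadget V G wt) : Disjoint g.toGadgetData.Xset g.toGadgetData.Qset := by
  exact List.rel_of_pairwise_cons ((gparts g).tail.tail.tail.tail.tail.tail) (by simp)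

lemma d78 (g : Gadget V G wt) : Disjoint (G.edgeFinset.biUnion g.Y) (G.edgeFinset.biUnion g.Z) := by
  exact List.rel_of_pairwise_cons ((gparts g).tail.tail.tail.tail.tail.tail.tail) (by simp)

lemma d79 (g : Gadget V G wt) : Disjoint (G.edgeFinset.biUnion g.Y) g.toGadgetData.Qset := by
  exact List.rel_of_pairwise_cons ((gparts g).tail.tail.tail.tail.tail.tail.tail) (by simp)

lemma d89 (g : Gadget V G wt) : Disjoint (G.edgeFinset.biUnion g.Z) g.toGadgetData.Qset := by
  exact List.rel_of_pairwise_cons ((gparts g).tail.tail.tail.tail.tail.tail.tail.tail) (by simp)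


lemma mem_Xset (g : Gadget V G wt) {e : Sym2 V} (he : e ∈ G.edgeFinset) {v : V} (hv : v ∈ e) :
    g.x e v ∈ g.toGadgetData.Xset := by
  unfold GadgetData.Xset
  exact Finset.mem_biUnion.mpr ⟨e, he, Finset.mem_image.mpr ⟨v, by simp [hv], rfl⟩⟩

lemma mem_Qset (g : Gadget V G wt) {e : Sym2 V} (he : e ∈ G.edgeFinset) (h : Fin 2) :
    g.q e h ∈ g.toGadgetData.Qset := by
  unfold GadgetData.Qset
  refine Finset.mem_biUnion.mpr ⟨e, he, ?_⟩
  fin_cases h <;> simp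

lemma mem_origSet (g : Gadget V G wt) (v : V) :
    g.orig v ∈ Finset.univ.image g.orig := Finset.mem_image_of_mem _ (Finset.mem_univ v)

/-- a b-vertex has distinctly-colored neighbours covering all other colors; bound on
card of any superset of its neighbourhood -/
lemma bvertex_le_card {VH : Type*} [DecidableEq VH] {H : SimpleGraph VH} {k : ℕ}
    {c : VH → Fin k} {a : VH} (hb : IsBVertex H c a) (T : Finset VH)
    (hT : ∀ b, H.Adj a b → b ∈ T) : k - 1 ≤ (T.image c).card := by
  have hsub : Finset.univ.erase (c a) ⊆ T.image c := by
    intro col hcol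
    obtain ⟨b, hadj, hcb⟩ := hb col (Finset.ne_of_mem_erase hcol)
    exact Finset.mem_image.mpr ⟨b, hT b hadj, hcb⟩
  calc k - 1 = (Finset.univ.erase (c a)).card := by
        rw [Finset.card_erase_of_mem (Finset.mem_univ _)]; simp
    _ ≤ _ := Finset.card_le_card hsub

lemma bvertex_image_eq {VH : Type*} [DecidableEq VH] {H : SimpleGraph VH} {k : ℕ}
    {c : VH → Fin k} (hprop : ∀ ⦃a b : VH⦄, H.Adj a b → c a ≠ c b) {a : VH}
    (hb : IsBVertex H c a) (T : Finset VH)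
    (hT : ∀ b, H.Adj a b → b ∈ T) (hT2 : ∀ b ∈ T, H.Adj a b) :
    T.image c = Finset.univ.erase (c a) := by
  apply Finset.Subset.antisymm
  · intro col hcol
    obtain ⟨b, hbT, rfl⟩ := Finset.mem_image.mp hcol
    exact Finset.mem_erase.mpr ⟨(hprop (hT2 b hbT)).symm, Finset.mem_univ _⟩
  · intro col hcol
    obtain ⟨b, hadj, hcb⟩ := hb col (Finset.ne_of_mem_erase hcol)
    exact Finset.mem_image.mpr ⟨b, hT b hadj, hcb⟩

lemma bvertex_injOn {VH : Type*} [DecidableEq VH] {H : SimpleGraph VH} {k : ℕ}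
    {c : VH → Fin k} (hprop : ∀ ⦃a b : VH⦄, H.Adj a b → c a ≠ c b) {a : VH}
    (hb : IsBVertex H c a) (T : Finset VH)
    (hT : ∀ b, H.Adj a b → b ∈ T) (hT2 : ∀ b ∈ T, H.Adj a b)
    (hcard : T.card = k - 1) : Set.InjOn c T := by
  have him := bvertex_image_eq hprop hb T hT hT2
  have hcc : (T.image c).card = T.card := by
    rw [him, Finset.card_erase_of_mem (Finset.mem_univ _), hcard]
    simp
  exact Finset.card_image_iff.mp hcc

def elim2 {α : Type*} {C : Sort*} {s t : Finset α} (d : Disjoint s t) {a b : α}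
    (h : a = b) (ha : a ∈ s) (hb : b ∈ t) : C := by
  subst h; exact absurd hb (Finset.disjoint_left.mp d ha)

lemma mem_Yset (g : Gadget V G wt) {e : Sym2 V} (he : e ∈ G.edgeFinset) {b : g.VH}
    (hb : b ∈ g.Y e) : b ∈ G.edgeFinset.biUnion g.Y := Finset.mem_biUnion.mpr ⟨e, he, hb⟩

lemma mem_Zset (g : Gadget V G wt) {e : Sym2 V} (he : e ∈ G.edgeFinset) {b : g.VH}
    (hb : b ∈ g.Z e) : b ∈ G.edgeFinset.biUnion g.Z := Finset.mem_biUnion.mpr ⟨e, he, hb⟩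

lemma mem_PSet (g : Gadget V G wt) {v : V} {b : g.VH} (hb : b ∈ g.P v) :
    b ∈ Finset.univ.biUnion g.P := Finset.mem_biUnion.mpr ⟨v, Finset.mem_univ v, hb⟩

lemma mem_ASet (g : Gadget V G wt) {s : g.VH} (hs : s ∈ g.Acenters) {b : g.VH}
    (hb : b ∈ g.Aleaves s) : b ∈ g.Acenters.biUnion g.Aleaves :=
  Finset.mem_biUnion.mpr ⟨s, hs, hb⟩

/-- neighbours of `x e u` are inside `Y ∪ Z ∪ L ∪ {q0, q1}` -/
lemma nbhd_x (g : Gadget V G wt) {e : Sym2 V} (he : e ∈ G.edgeFinset) {u : V} (hu : u ∈ e)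
    {b : g.VH} (hadj : g.H.Adj (g.x e u) b) :
    b ∈ g.Y e ∪ g.Z e ∪ g.L e u ∪ {g.q e 0, g.q e 1} := by
  have hx := mem_Xset g he hu
  simp only [Finset.mem_union, Finset.mem_insert, Finset.mem_singleton]
  rw [g.adj_iff] at hadj
  rcases hadj with hS | hS
  · rcases hS with ⟨h1, h2⟩ | ⟨s, hs, h1, h2⟩ | ⟨v, h1, h2⟩ | ⟨e', he', v, hv, h1, h2⟩ |
      ⟨e', he', v', hv', h1, h2⟩ | ⟨e', he', h1, h2⟩ | ⟨e', he', hh, h1, h2⟩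
    · exact elim2 (d06 g) h1.symm (Finset.mem_singleton_self _) hx
    · exact elim2 (d26 g) h1.symm hs hx
    · exact elim2 (d46 g) h1.symm (mem_origSet g v) hx
    · exact elim2 (d46 g) h1.symm (mem_origSet g v) hx
    · have h3 := g.x_inj e he u hu e' he' v' hv' h1
      rw [Prod.mk.injEq] at h3
      obtain ⟨rfl, rfl⟩ := h3
      tauto
    · exact elim2 (d69 g) h1 hx (mem_Qset g he' 0)
    · exact elim2 (d69 g) h1 hx (mem_Qset g he' hh)
  · rcases hS with ⟨h1, h2⟩ | ⟨s, hs, h1, h2⟩ | ⟨v, h1, h2⟩ | ⟨e', he', v, hv, h1, h2⟩ |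
      ⟨e', he', v', hv', h1, h2⟩ | ⟨e', he', h1, h2⟩ | ⟨e', he', hh, h1, h2⟩
    · exact elim2 (d16 g) rfl h2 hx
    · exact elim2 (d36 g) rfl (mem_ASet g hs h2) hx
    · exact elim2 (d56 g) rfl (mem_PSet g h2) hx
    · rcases h2 with h2 | h2
      · exact elim2 (d16 g) rfl (g.L_subset e' he' v hv h2) hx
      · exact elim2 (d67 g) rfl hx (mem_Yset g he' h2)
    · rcases h2 with h2 | h2 | h2
      · exact elim2 (d67 g) rfl hx (mem_Yset g he' h2)
      · exact elim2 (d68 g) rfl hx (mem_Zset g he' h2)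
      · exact elim2 (d16 g) rfl (g.L_subset e' he' v' hv' h2) hx
    · exact elim2 (d69 g) h2 hx (mem_Qset g he' 1)
    · rcases h2 with h2 | ⟨v', hv', h2⟩ | ⟨v', hv', h2⟩
      · exact elim2 (d68 g) rfl hx (mem_Zset g he' h2)
      · exact elim2 (d16 g) rfl (g.L_subset e' he' v' hv' h2) hx
      · have h3 := g.x_inj e he u hu e' he' v' hv' h2
        rw [Prod.mk.injEq] at h3
        obtain ⟨rfl, rfl⟩ := h3
        subst h1
        fin_cases hh <;> tauto

lemma adj_x_mem (g : Gadget V G wt) {e : Sym2 V} (he : e ∈ G.edgeFinset) {u : V} (hu : u ∈ e)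
    {b : g.VH} (hb : b ∈ g.Y e ∨ b ∈ g.Z e ∨ b ∈ g.L e u) : g.H.Adj (g.x e u) b :=
  (g.adj_iff _ _).mpr (Or.inl (Or.inr (Or.inr (Or.inr (Or.inr (Or.inl
    ⟨e, he, u, hu, rfl, hb⟩))))))

lemma adj_x_q (g : Gadget V G wt) {e : Sym2 V} (he : e ∈ G.edgeFinset) {u : V} (hu : u ∈ e)
    (h : Fin 2) : g.H.Adj (g.x e u) (g.q e h) :=
  ((g.adj_iff _ _).mpr (Or.inl (Or.inr (Or.inr (Or.inr (Or.inr (Or.inr (Or.inr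
    ⟨e, he, h, rfl, Or.inr (Or.inr ⟨u, hu, rfl⟩)⟩)))))))).symm

lemma adj_q_ZL (g : Gadget V G wt) {e : Sym2 V} (he : e ∈ G.edgeFinset) (h : Fin 2)
    {b : g.VH} (hb : b ∈ g.Z e ∨ ∃ v, v ∈ e ∧ b ∈ g.L e v) : g.H.Adj (g.q e h) b := by
  refine (g.adj_iff _ _).mpr (Or.inl (Or.inr (Or.inr (Or.inr (Or.inr (Or.inr (Or.inr
    ⟨e, he, h, rfl, ?_⟩)))))))
  rcases hb with h1 | ⟨v, hv, h1⟩
  · exact Or.inl h1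
  · exact Or.inr (Or.inl ⟨v, hv, h1⟩)

lemma adj_q_q (g : Gadget V G wt) {e : Sym2 V} (he : e ∈ G.edgeFinset) {h h' : Fin 2}
    (hne : h ≠ h') : g.H.Adj (g.q e h) (g.q e h') := by
  have h01 : g.H.Adj (g.q e 0) (g.q e 1) :=
    (g.adj_iff _ _).mpr (Or.inl (Or.inr (Or.inr (Or.inr (Or.inr (Or.inr (Or.inl ⟨e, he, rfl, rfl⟩)))))))
  fin_cases h <;> fin_cases h' <;> simp_all <;> exact h01.symm

lemma adj_orig_LY (g : Gadget V G wt) {e : Sym2 V} (he : e ∈ G.edgeFinset) {v : V} (hv : v ∈ e)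
    {b : g.VH} (hb : b ∈ g.L e v ∨ b ∈ g.Y e) : g.H.Adj (g.orig v) b :=
  (g.adj_iff _ _).mpr (Or.inl (Or.inr (Or.inr (Or.inr (Or.inl ⟨e, he, v, hv, rfl, hb⟩)))))

/-- neighbours of `q e h` -/
lemma nbhd_q (g : Gadget V G wt) {e : Sym2 V} (he : e ∈ G.edgeFinset) {h h' : Fin 2}
    (hne : h ≠ h') {b : g.VH} (hadj : g.H.Adj (g.q e h) b) :
    b ∈ g.Z e ∪ (Finset.univ.filter (· ∈ e)).biUnion (g.L e) ∪
      (Finset.univ.filter (· ∈ e)).image (g.x e) ∪ {g.q e h'} := by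
  have hq := mem_Qset g he h
  simp only [Finset.mem_union, Finset.mem_singleton, Finset.mem_biUnion, Finset.mem_image,
    Finset.mem_filter, Finset.mem_univ, true_and]
  rw [g.adj_iff] at hadj
  rcases hadj with hS | hS
  · rcases hS with ⟨h1, h2⟩ | ⟨s, hs, h1, h2⟩ | ⟨v, h1, h2⟩ | ⟨e', he', v, hv, h1, h2⟩ |
      ⟨e', he', v', hv', h1, h2⟩ | ⟨e', he', h1, h2⟩ | ⟨e', he', hh, h1, h2⟩
    · exact elim2 (d09 g) h1.symm (Finset.mem_singleton_self _) hq
    · exact elim2 (d29 g) h1.symm hs hq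
    · exact elim2 (d49 g) h1.symm (mem_origSet g v) hq
    · exact elim2 (d49 g) h1.symm (mem_origSet g v) hq
    · exact elim2 (d69 g) h1.symm (mem_Xset g he' hv') hq
    · have h3 := g.q_inj e he h e' he' 0 h1
      rw [Prod.mk.injEq] at h3
      obtain ⟨rfl, rfl⟩ := h3
      have h4 : h' = 1 := by fin_cases h' <;> simp_all
      subst h4; tauto
    · have h3 := g.q_inj e he h e' he' hh h1
      rw [Prod.mk.injEq] at h3
      obtain ⟨rfl, rfl⟩ := h3
      rcases h2 with h2 | ⟨v', hv', h2⟩ | ⟨v', hv', h2⟩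
      · tauto
      · exact Or.inl (Or.inl (Or.inr ⟨v', hv', h2⟩))
      · exact Or.inl (Or.inr ⟨v', hv', h2.symm⟩)
  · rcases hS with ⟨h1, h2⟩ | ⟨s, hs, h1, h2⟩ | ⟨v, h1, h2⟩ | ⟨e', he', v, hv, h1, h2⟩ |
      ⟨e', he', v', hv', h1, h2⟩ | ⟨e', he', h1, h2⟩ | ⟨e', he', hh, h1, h2⟩
    · exact elim2 (d19 g) rfl h2 hq
    · exact elim2 (d39 g) rfl (mem_ASet g hs h2) hq
    · exact elim2 (d59 g) rfl (mem_PSet g h2) hq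
    · rcases h2 with h2 | h2
      · exact elim2 (d19 g) rfl (g.L_subset e' he' v hv h2) hq
      · exact elim2 (d79 g) rfl (mem_Yset g he' h2) hq
    · rcases h2 with h2 | h2 | h2
      · exact elim2 (d79 g) rfl (mem_Yset g he' h2) hq
      · exact elim2 (d89 g) rfl (mem_Zset g he' h2) hq
      · exact elim2 (d19 g) rfl (g.L_subset e' he' v' hv' h2) hq
    · have h3 := g.q_inj e he h e' he' 1 h2
      rw [Prod.mk.injEq] at h3
      obtain ⟨rfl, rfl⟩ := h3
      have h4 : h' = 0 := by fin_cases h' <;> simp_all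
      subst h4; tauto
    · rcases h2 with h2 | ⟨v', hv', h2⟩ | ⟨v', hv', h2⟩
      · exact elim2 (d89 g) rfl (mem_Zset g he' h2) hq
      · exact elim2 (d19 g) rfl (g.L_subset e' he' v' hv' h2) hq
      · exact elim2 (d69 g) h2.symm (mem_Xset g he' hv') hq
-- note: last case has q e h = x e' v' : d69 needs (x ∈ X) (x ∈ Q): h2 : q e h = x e' v'

/-- neighbours of `orig v` -/
lemma nbhd_orig (g : Gadget V G wt) {v : V} {b : g.VH} (hadj : g.H.Adj (g.orig v) b) :
    b ∈ g.P v ∪ (G.edgeFinset.filter (fun e => v ∈ e)).biUnion (fun e => g.L e v ∪ g.Y e) := by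
  have hv4 := mem_origSet g v
  simp only [Finset.mem_union, Finset.mem_biUnion, Finset.mem_filter]
  rw [g.adj_iff] at hadj
  rcases hadj with hS | hS
  · rcases hS with ⟨h1, h2⟩ | ⟨s, hs, h1, h2⟩ | ⟨v', h1, h2⟩ | ⟨e', he', v', hv', h1, h2⟩ |
      ⟨e', he', v', hv', h1, h2⟩ | ⟨e', he', h1, h2⟩ | ⟨e', he', hh, h1, h2⟩
    · exact elim2 (d04 g) h1.symm (Finset.mem_singleton_self _) hv4
    · exact elim2 (d24 g) h1.symm hs hv4
    · obtain rfl := g.orig_inj h1; tauto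
    · obtain rfl := g.orig_inj h1; exact Or.inr ⟨e', ⟨he', hv'⟩, by simpa using h2⟩
    · exact elim2 (d46 g) h1 hv4 (mem_Xset g he' hv')
    · exact elim2 (d49 g) h1 hv4 (mem_Qset g he' 0)
    · exact elim2 (d49 g) h1 hv4 (mem_Qset g he' hh)
  · rcases hS with ⟨h1, h2⟩ | ⟨s, hs, h1, h2⟩ | ⟨v', h1, h2⟩ | ⟨e', he', v', hv', h1, h2⟩ |
      ⟨e', he', v', hv', h1, h2⟩ | ⟨e', he', h1, h2⟩ | ⟨e', he', hh, h1, h2⟩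
    · exact elim2 (d14 g) rfl h2 hv4
    · exact elim2 (d34 g) rfl (mem_ASet g hs h2) hv4
    · exact elim2 (d45 g) rfl hv4 (mem_PSet g h2)
    · rcases h2 with h2 | h2
      · exact elim2 (d14 g) rfl (g.L_subset e' he' v' hv' h2) hv4
      · exact elim2 (d47 g) rfl hv4 (mem_Yset g he' h2)
    · rcases h2 with h2 | h2 | h2
      · exact elim2 (d47 g) rfl hv4 (mem_Yset g he' h2)
      · exact elim2 (d48 g) rfl hv4 (mem_Zset g he' h2)
      · exact elim2 (d14 g) rfl (g.L_subset e' he' v' hv' h2) hv4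
    · exact elim2 (d49 g) h2 hv4 (mem_Qset g he' 1)
    · rcases h2 with h2 | ⟨v', hv', h2⟩ | ⟨v', hv', h2⟩
      · exact elim2 (d48 g) rfl hv4 (mem_Zset g he' h2)
      · exact elim2 (d14 g) rfl (g.L_subset e' he' v' hv' h2) hv4
      · exact elim2 (d46 g) h2 hv4 (mem_Xset g he' hv')

lemma card5 {α : Type*} [DecidableEq α] (a b c d e : α) :
    ({a, b, c, d, e} : Finset α).card ≤ 5 := by
  refine (Finset.card_insert_le _ _).trans (Nat.succ_le_succ ?_)
  refine (Finset.card_insert_le _ _).trans (Nat.succ_le_succ ?_)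
  refine (Finset.card_insert_le _ _).trans (Nat.succ_le_succ ?_)
  refine (Finset.card_insert_le _ _).trans (Nat.succ_le_succ ?_)
  simp

lemma ends_card (e : Sym2 V) : (Finset.univ.filter (· ∈ e)).card ≤ 2 := by
  induction e using Sym2.ind with
  | _ u v =>
    refine (Finset.card_le_card (fun w hw => ?_)).trans
      ((Finset.card_insert_le u {v}).trans (by simp))
    simp only [Finset.mem_filter, Sym2.mem_iff] at hw
    simp only [Finset.mem_insert, Finset.mem_singleton]
    tauto

lemma L_unique (g : Gadget V G wt) {e e' : Sym2 V} {v v' : V} (he : e ∈ G.edgeFinset)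
    (hv : v ∈ e) (he' : e' ∈ G.edgeFinset) (hv' : v' ∈ e') {a : g.VH}
    (h : a ∈ g.L e v) (h' : a ∈ g.L e' v') : e = e' ∧ v = v' := by
  by_contra hne
  have hne' : (e, v) ≠ (e', v') := by simp only [ne_eq, Prod.mk.injEq]; tauto
  exact Finset.disjoint_left.mp (g.L_disjoint e he v hv e' he' v' hv' hne') h h'

lemma Y_unique (g : Gadget V G wt) {e e' : Sym2 V} (he : e ∈ G.edgeFinset)
    (he' : e' ∈ G.edgeFinset) {a : g.VH} (h : a ∈ g.Y e) (h' : a ∈ g.Y e') : e = e' := by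
  by_contra hne
  exact Finset.disjoint_left.mp (g.Y_disjoint e he e' he' hne) h h'

lemma Z_unique (g : Gadget V G wt) {e e' : Sym2 V} (he : e ∈ G.edgeFinset)
    (he' : e' ∈ G.edgeFinset) {a : g.VH} (h : a ∈ g.Z e) (h' : a ∈ g.Z e') : e = e' := by
  by_contra hne
  exact Finset.disjoint_left.mp (g.Z_disjoint e he e' he' hne) h h'

set_option maxHeartbeats 1600000

/-- every vertex outside `bigSet` has at most 5 neighbours -/
lemma small_nbhd (g : Gadget V G wt) {a : g.VH} (ha : a ∉ g.toGadgetData.bigSet) :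
    ∃ T : Finset g.VH, T.card ≤ 5 ∧ ∀ b, g.H.Adj a b → b ∈ T := by
  obtain ⟨p, hp, hap⟩ := g.parts_cover a
  rw [GadgetData.parts] at hp
  have hbig : a ∉ ({g.sstar} : Finset g.VH) ∧ a ∉ Finset.univ.image g.orig ∧
      a ∉ g.toGadgetData.Qset ∧ a ∉ g.Acenters ∧ a ∉ g.toGadgetData.Xset := by
    unfold GadgetData.bigSet at ha
    simp only [Finset.mem_union, not_or] at ha
    tauto
  simp only [List.mem_cons, List.not_mem_nil, or_false] at hp
  rcases hp with rfl | rfl | rfl | rfl | rfl | rfl | rfl | rfl | rfl | rfl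
  · exact absurd hap hbig.1
  · -- a ∈ Sleaves
    by_cases hL : ∃ e, e ∈ G.edgeFinset ∧ ∃ v, v ∈ e ∧ a ∈ g.L e v
    · obtain ⟨e, he, v, hv, haL⟩ := hL
      refine ⟨{g.sstar, g.orig v, g.x e v, g.q e 0, g.q e 1}, card5 _ _ _ _ _, fun b hadj => ?_⟩
      simp only [Finset.mem_insert, Finset.mem_singleton]
      rw [g.adj_iff] at hadj
      rcases hadj with hS | hS
      · rcases hS with ⟨h1, h2⟩ | ⟨s, hs, h1, h2⟩ | ⟨v', h1, h2⟩ | ⟨e', he', v', hv', h1, h2⟩ |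
          ⟨e', he', v', hv', h1, h2⟩ | ⟨e', he', h1, h2⟩ | ⟨e', he', hh, h1, h2⟩
        · exact elim2 (d01 g) h1.symm (Finset.mem_singleton_self _) hap
        · exact elim2 (d12 g) h1 hap hs
        · exact elim2 (d14 g) h1 hap (mem_origSet g v')
        · exact elim2 (d14 g) h1 hap (mem_origSet g v')
        · exact elim2 (d16 g) h1 hap (mem_Xset g he' hv')
        · exact elim2 (d19 g) h1 hap (mem_Qset g he' 0)
        · exact elim2 (d19 g) h1 hap (mem_Qset g he' hh)
      · rcases hS with ⟨h1, h2⟩ | ⟨s, hs, h1, h2⟩ | ⟨v', h1, h2⟩ | ⟨e', he', v', hv', h1, h2⟩ |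
          ⟨e', he', v', hv', h1, h2⟩ | ⟨e', he', h1, h2⟩ | ⟨e', he', hh, h1, h2⟩
        · tauto
        · exact elim2 (d13 g) rfl hap (mem_ASet g hs h2)
        · exact elim2 (d15 g) rfl hap (mem_PSet g h2)
        · rcases h2 with h2 | h2
          · obtain ⟨rfl, rfl⟩ := L_unique g he' hv' he hv h2 haL
            tauto
          · exact elim2 (d17 g) rfl hap (mem_Yset g he' h2)
        · rcases h2 with h2 | h2 | h2
          · exact elim2 (d17 g) rfl hap (mem_Yset g he' h2)
          · exact elim2 (d18 g) rfl hap (mem_Zset g he' h2)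
          · obtain ⟨rfl, rfl⟩ := L_unique g he' hv' he hv h2 haL
            tauto
        · exact elim2 (d19 g) h2 hap (mem_Qset g he' 1)
        · rcases h2 with h2 | ⟨v', hv', h2⟩ | ⟨v', hv', h2⟩
          · exact elim2 (d18 g) rfl hap (mem_Zset g he' h2)
          · obtain ⟨rfl, rfl⟩ := L_unique g he' hv' he hv h2 haL
            subst h1; fin_cases hh <;> tauto
          · exact elim2 (d16 g) h2 hap (mem_Xset g he' hv')
    · refine ⟨{g.sstar}, by simp, fun b hadj => ?_⟩
      simp only [Finset.mem_singleton]
      rw [g.adj_iff] at hadj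
      rcases hadj with hS | hS
      · rcases hS with ⟨h1, h2⟩ | ⟨s, hs, h1, h2⟩ | ⟨v', h1, h2⟩ | ⟨e', he', v', hv', h1, h2⟩ |
          ⟨e', he', v', hv', h1, h2⟩ | ⟨e', he', h1, h2⟩ | ⟨e', he', hh, h1, h2⟩
        · exact elim2 (d01 g) h1.symm (Finset.mem_singleton_self _) hap
        · exact elim2 (d12 g) h1 hap hs
        · exact elim2 (d14 g) h1 hap (mem_origSet g v')
        · exact elim2 (d14 g) h1 hap (mem_origSet g v')
        · exact elim2 (d16 g) h1 hap (mem_Xset g he' hv')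
        · exact elim2 (d19 g) h1 hap (mem_Qset g he' 0)
        · exact elim2 (d19 g) h1 hap (mem_Qset g he' hh)
      · rcases hS with ⟨h1, h2⟩ | ⟨s, hs, h1, h2⟩ | ⟨v', h1, h2⟩ | ⟨e', he', v', hv', h1, h2⟩ |
          ⟨e', he', v', hv', h1, h2⟩ | ⟨e', he', h1, h2⟩ | ⟨e', he', hh, h1, h2⟩
        · tauto
        · exact elim2 (d13 g) rfl hap (mem_ASet g hs h2)
        · exact elim2 (d15 g) rfl hap (mem_PSet g h2)
        · rcases h2 with h2 | h2
          · exact absurd ⟨e', he', v', hv', h2⟩ hL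
          · exact elim2 (d17 g) rfl hap (mem_Yset g he' h2)
        · rcases h2 with h2 | h2 | h2
          · exact elim2 (d17 g) rfl hap (mem_Yset g he' h2)
          · exact elim2 (d18 g) rfl hap (mem_Zset g he' h2)
          · exact absurd ⟨e', he', v', hv', h2⟩ hL
        · exact elim2 (d19 g) h2 hap (mem_Qset g he' 1)
        · rcases h2 with h2 | ⟨v', hv', h2⟩ | ⟨v', hv', h2⟩
          · exact elim2 (d18 g) rfl hap (mem_Zset g he' h2)
          · exact absurd ⟨e', he', v', hv', h2⟩ hL
          · exact elim2 (d16 g) h2 hap (mem_Xset g he' hv')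
  · exact absurd hap hbig.2.2.2.1
  · -- a ∈ Aleaves
    obtain ⟨s0, hs0, haA⟩ := Finset.mem_biUnion.mp hap
    refine ⟨{s0}, by simp, fun b hadj => ?_⟩
    simp only [Finset.mem_singleton]
    rw [g.adj_iff] at hadj
    rcases hadj with hS | hS
    · rcases hS with ⟨h1, h2⟩ | ⟨s, hs, h1, h2⟩ | ⟨v', h1, h2⟩ | ⟨e', he', v', hv', h1, h2⟩ |
        ⟨e', he', v', hv', h1, h2⟩ | ⟨e', he', h1, h2⟩ | ⟨e', he', hh, h1, h2⟩
      · exact elim2 (d03 g) h1.symm (Finset.mem_singleton_self _) hap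
      · exact elim2 (d23 g) h1.symm hs hap
      · exact elim2 (d34 g) h1 hap (mem_origSet g v')
      · exact elim2 (d34 g) h1 hap (mem_origSet g v')
      · exact elim2 (d36 g) h1 hap (mem_Xset g he' hv')
      · exact elim2 (d39 g) h1 hap (mem_Qset g he' 0)
      · exact elim2 (d39 g) h1 hap (mem_Qset g he' hh)
    · rcases hS with ⟨h1, h2⟩ | ⟨s, hs, h1, h2⟩ | ⟨v', h1, h2⟩ | ⟨e', he', v', hv', h1, h2⟩ |
        ⟨e', he', v', hv', h1, h2⟩ | ⟨e', he', h1, h2⟩ | ⟨e', he', hh, h1, h2⟩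
      · exact elim2 (d13 g) rfl h2 hap
      · by_cases hss : s = s0
        · subst hss; exact h1
        · exact absurd haA (Finset.disjoint_left.mp (g.Aleaves_disjoint s hs s0 hs0 hss) h2)
      · exact elim2 (d35 g) rfl hap (mem_PSet g h2)
      · rcases h2 with h2 | h2
        · exact elim2 (d13 g) rfl (g.L_subset e' he' v' hv' h2) hap
        · exact elim2 (d37 g) rfl hap (mem_Yset g he' h2)
      · rcases h2 with h2 | h2 | h2
        · exact elim2 (d37 g) rfl hap (mem_Yset g he' h2)
        · exact elim2 (d38 g) rfl hap (mem_Zset g he' h2)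
        · exact elim2 (d13 g) rfl (g.L_subset e' he' v' hv' h2) hap
      · exact elim2 (d39 g) h2 hap (mem_Qset g he' 1)
      · rcases h2 with h2 | ⟨v', hv', h2⟩ | ⟨v', hv', h2⟩
        · exact elim2 (d38 g) rfl hap (mem_Zset g he' h2)
        · exact elim2 (d13 g) rfl (g.L_subset e' he' v' hv' h2) hap
        · exact elim2 (d36 g) h2 hap (mem_Xset g he' hv')
  · exact absurd hap hbig.2.1
  · -- a ∈ P-set
    obtain ⟨v0, _, haP⟩ := Finset.mem_biUnion.mp hap
    refine ⟨{g.orig v0}, by simp, fun b hadj => ?_⟩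
    simp only [Finset.mem_singleton]
    rw [g.adj_iff] at hadj
    rcases hadj with hS | hS
    · rcases hS with ⟨h1, h2⟩ | ⟨s, hs, h1, h2⟩ | ⟨v', h1, h2⟩ | ⟨e', he', v', hv', h1, h2⟩ |
        ⟨e', he', v', hv', h1, h2⟩ | ⟨e', he', h1, h2⟩ | ⟨e', he', hh, h1, h2⟩
      · exact elim2 (d05 g) h1.symm (Finset.mem_singleton_self _) hap
      · exact elim2 (d25 g) h1.symm hs hap
      · exact elim2 (d45 g) h1.symm (mem_origSet g v') hap
      · exact elim2 (d45 g) h1.symm (mem_origSet g v') hap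
      · exact elim2 (d56 g) h1 hap (mem_Xset g he' hv')
      · exact elim2 (d59 g) h1 hap (mem_Qset g he' 0)
      · exact elim2 (d59 g) h1 hap (mem_Qset g he' hh)
    · rcases hS with ⟨h1, h2⟩ | ⟨s, hs, h1, h2⟩ | ⟨v', h1, h2⟩ | ⟨e', he', v', hv', h1, h2⟩ |
        ⟨e', he', v', hv', h1, h2⟩ | ⟨e', he', h1, h2⟩ | ⟨e', he', hh, h1, h2⟩
      · exact elim2 (d15 g) rfl h2 hap
      · exact elim2 (d35 g) rfl (mem_ASet g hs h2) hap
      · by_cases hvv : v' = v0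
        · subst hvv; exact h1
        · exact absurd haP (Finset.disjoint_left.mp (g.P_disjoint v' v0 hvv) h2)
      · rcases h2 with h2 | h2
        · exact elim2 (d15 g) rfl (g.L_subset e' he' v' hv' h2) hap
        · exact elim2 (d57 g) rfl hap (mem_Yset g he' h2)
      · rcases h2 with h2 | h2 | h2
        · exact elim2 (d57 g) rfl hap (mem_Yset g he' h2)
        · exact elim2 (d58 g) rfl hap (mem_Zset g he' h2)
        · exact elim2 (d15 g) rfl (g.L_subset e' he' v' hv' h2) hap
      · exact elim2 (d59 g) h2 hap (mem_Qset g he' 1)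
      · rcases h2 with h2 | ⟨v', hv', h2⟩ | ⟨v', hv', h2⟩
        · exact elim2 (d58 g) rfl hap (mem_Zset g he' h2)
        · exact elim2 (d15 g) rfl (g.L_subset e' he' v' hv' h2) hap
        · exact elim2 (d56 g) h2 hap (mem_Xset g he' hv')
  · exact absurd hap hbig.2.2.2.2
  · -- a ∈ Y-set
    obtain ⟨e0, he0, haY⟩ := Finset.mem_biUnion.mp hap
    refine ⟨(Finset.univ.filter (· ∈ e0)).image g.orig ∪
        (Finset.univ.filter (· ∈ e0)).image (g.x e0), ?_, fun b hadj => ?_⟩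
    · refine (Finset.card_union_le _ _).trans ?_
      have h1 := (Finset.card_image_le (s := Finset.univ.filter (· ∈ e0)) (f := g.orig)).trans
        (ends_card e0)
      have h2 := (Finset.card_image_le (s := Finset.univ.filter (· ∈ e0)) (f := g.x e0)).trans
        (ends_card e0)
      omega
    simp only [Finset.mem_union, Finset.mem_image, Finset.mem_filter, Finset.mem_univ, true_and]
    rw [g.adj_iff] at hadj
    rcases hadj with hS | hS
    · rcases hS with ⟨h1, h2⟩ | ⟨s, hs, h1, h2⟩ | ⟨v', h1, h2⟩ | ⟨e', he', v', hv', h1, h2⟩ |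
        ⟨e', he', v', hv', h1, h2⟩ | ⟨e', he', h1, h2⟩ | ⟨e', he', hh, h1, h2⟩
      · exact elim2 (d07 g) h1.symm (Finset.mem_singleton_self _) hap
      · exact elim2 (d27 g) h1.symm hs hap
      · exact elim2 (d47 g) h1.symm (mem_origSet g v') hap
      · exact elim2 (d47 g) h1.symm (mem_origSet g v') hap
      · exact elim2 (d67 g) h1.symm (mem_Xset g he' hv') hap
      · exact elim2 (d79 g) h1 hap (mem_Qset g he' 0)
      · exact elim2 (d79 g) h1 hap (mem_Qset g he' hh)
    · rcases hS with ⟨h1, h2⟩ | ⟨s, hs, h1, h2⟩ | ⟨v', h1, h2⟩ | ⟨e', he', v', hv', h1, h2⟩ |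
        ⟨e', he', v', hv', h1, h2⟩ | ⟨e', he', h1, h2⟩ | ⟨e', he', hh, h1, h2⟩
      · exact elim2 (d17 g) rfl h2 hap
      · exact elim2 (d37 g) rfl (mem_ASet g hs h2) hap
      · exact elim2 (d57 g) rfl (mem_PSet g h2) hap
      · rcases h2 with h2 | h2
        · exact elim2 (d17 g) rfl (g.L_subset e' he' v' hv' h2) hap
        · obtain rfl := Y_unique g he' he0 h2 haY
          exact Or.inl ⟨v', hv', h1.symm⟩
      · rcases h2 with h2 | h2 | h2
        · obtain rfl := Y_unique g he' he0 h2 haY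
          exact Or.inr ⟨v', hv', h1.symm⟩
        · exact elim2 (d78 g) rfl hap (mem_Zset g he' h2)
        · exact elim2 (d17 g) rfl (g.L_subset e' he' v' hv' h2) hap
      · exact elim2 (d79 g) h2 hap (mem_Qset g he' 1)
      · rcases h2 with h2 | ⟨v', hv', h2⟩ | ⟨v', hv', h2⟩
        · exact elim2 (d78 g) rfl hap (mem_Zset g he' h2)
        · exact elim2 (d17 g) rfl (g.L_subset e' he' v' hv' h2) hap
        · exact elim2 (d67 g) h2.symm (mem_Xset g he' hv') hap
  · -- a ∈ Z-set
    obtain ⟨e0, he0, haZ⟩ := Finset.mem_biUnion.mp hap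
    refine ⟨(Finset.univ.filter (· ∈ e0)).image (g.x e0) ∪ {g.q e0 0, g.q e0 1}, ?_,
      fun b hadj => ?_⟩
    · refine (Finset.card_union_le _ _).trans ?_
      have h1 := (Finset.card_image_le (s := Finset.univ.filter (· ∈ e0)) (f := g.x e0)).trans
        (ends_card e0)
      have h2 : ({g.q e0 0, g.q e0 1} : Finset g.VH).card ≤ 2 :=
        (Finset.card_insert_le _ _).trans (by simp)
      omega
    simp only [Finset.mem_union, Finset.mem_image, Finset.mem_filter, Finset.mem_univ, true_and,
      Finset.mem_insert, Finset.mem_singleton]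
    rw [g.adj_iff] at hadj
    rcases hadj with hS | hS
    · rcases hS with ⟨h1, h2⟩ | ⟨s, hs, h1, h2⟩ | ⟨v', h1, h2⟩ | ⟨e', he', v', hv', h1, h2⟩ |
        ⟨e', he', v', hv', h1, h2⟩ | ⟨e', he', h1, h2⟩ | ⟨e', he', hh, h1, h2⟩
      · exact elim2 (d08 g) h1.symm (Finset.mem_singleton_self _) hap
      · exact elim2 (d28 g) h1.symm hs hap
      · exact elim2 (d48 g) h1.symm (mem_origSet g v') hap
      · exact elim2 (d48 g) h1.symm (mem_origSet g v') hap
      · exact elim2 (d68 g) h1.symm (mem_Xset g he' hv') hap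
      · exact elim2 (d89 g) h1 hap (mem_Qset g he' 0)
      · exact elim2 (d89 g) h1 hap (mem_Qset g he' hh)
    · rcases hS with ⟨h1, h2⟩ | ⟨s, hs, h1, h2⟩ | ⟨v', h1, h2⟩ | ⟨e', he', v', hv', h1, h2⟩ |
        ⟨e', he', v', hv', h1, h2⟩ | ⟨e', he', h1, h2⟩ | ⟨e', he', hh, h1, h2⟩
      · exact elim2 (d18 g) rfl h2 hap
      · exact elim2 (d38 g) rfl (mem_ASet g hs h2) hap
      · exact elim2 (d58 g) rfl (mem_PSet g h2) hap
      · rcases h2 with h2 | h2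
        · exact elim2 (d18 g) rfl (g.L_subset e' he' v' hv' h2) hap
        · exact elim2 (d78 g) rfl (mem_Yset g he' h2) hap
      · rcases h2 with h2 | h2 | h2
        · exact elim2 (d78 g) rfl (mem_Yset g he' h2) hap
        · obtain rfl := Z_unique g he' he0 h2 haZ
          exact Or.inl ⟨v', hv', h1.symm⟩
        · exact elim2 (d18 g) rfl (g.L_subset e' he' v' hv' h2) hap
      · exact elim2 (d89 g) h2 hap (mem_Qset g he' 1)
      · rcases h2 with h2 | ⟨v', hv', h2⟩ | ⟨v', hv', h2⟩
        · obtain rfl := Z_unique g he' he0 h2 haZ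
          subst h1; fin_cases hh <;> tauto
        · exact elim2 (d18 g) rfl (g.L_subset e' he' v' hv' h2) hap
        · exact elim2 (d68 g) h2.symm (mem_Xset g he' hv') hap
  · exact absurd hap hbig.2.2.1

lemma ends {e : Sym2 V} (he : e ∈ G.edgeFinset) :
    ∃ u v : V, u ≠ v ∧ e = s(u, v) ∧ Finset.univ.filter (· ∈ e) = {u, v} := by
  induction e using Sym2.ind with
  | _ a b =>
    have hadj : G.Adj a b := by simpa [SimpleGraph.mem_edgeFinset] using he
    exact ⟨a, b, hadj.ne, rfl, by ext w; simp [Sym2.mem_iff]⟩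

lemma q_ne (g : Gadget V G wt) {e : Sym2 V} (he : e ∈ G.edgeFinset) {h h' : Fin 2}
    (hne : h ≠ h') : g.q e h ≠ g.q e h' := fun hq => by
  have := g.q_inj e he h e he h' hq
  simp_all

lemma x_ne (g : Gadget V G wt) {e : Sym2 V} (he : e ∈ G.edgeFinset) {u v : V}
    (hu : u ∈ e) (hv : v ∈ e) (hne : u ≠ v) : g.x e u ≠ g.x e v := fun hq => by
  have := g.x_inj e he u hu e he v hv hq
  simp_all

lemma mkdisj {α : Type*} {s t : Finset α} (h : ∀ a, a ∈ s → a ∈ t → False) :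
    Disjoint s t := Finset.disjoint_left.mpr fun a ha hb => (h a ha hb).elim

lemma card_Tx (g : Gadget V G wt) {e : Sym2 V} (he : e ∈ G.edgeFinset) {u : V} (hu : u ∈ e) :
    (g.Y e ∪ g.Z e ∪ g.L e u ∪ {g.q e 0, g.q e 1}).card = numColors G wt - 1 := by
  have h1 : Disjoint (g.Y e) (g.Z e) := mkdisj fun b hb hb' =>
    Finset.disjoint_left.mp (d78 g) (mem_Yset g he hb) (mem_Zset g he hb')
  have h2 : Disjoint (g.Y e ∪ g.Z e) (g.L e u) := by
    rw [Finset.disjoint_union_left]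
    constructor
    · exact mkdisj fun b hb hb' => Finset.disjoint_left.mp (d17 g)
        (g.L_subset e he u hu hb') (mem_Yset g he hb)
    · exact mkdisj fun b hb hb' => Finset.disjoint_left.mp (d18 g)
        (g.L_subset e he u hu hb') (mem_Zset g he hb)
  have h3 : Disjoint (g.Y e ∪ g.Z e ∪ g.L e u) ({g.q e 0, g.q e 1} : Finset g.VH) := by
    rw [Finset.disjoint_union_left, Finset.disjoint_union_left]
    refine ⟨⟨?_, ?_⟩, ?_⟩ <;> rw [Finset.disjoint_right] <;> intro b hb <;>
      simp only [Finset.mem_insert, Finset.mem_singleton] at hb <;>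
      rcases hb with rfl | rfl <;> intro hb'
    · exact Finset.disjoint_left.mp (d79 g) (mem_Yset g he hb') (mem_Qset g he 0)
    · exact Finset.disjoint_left.mp (d79 g) (mem_Yset g he hb') (mem_Qset g he 1)
    · exact Finset.disjoint_left.mp (d89 g) (mem_Zset g he hb') (mem_Qset g he 0)
    · exact Finset.disjoint_left.mp (d89 g) (mem_Zset g he hb') (mem_Qset g he 1)
    · exact Finset.disjoint_left.mp (d19 g) (g.L_subset e he u hu hb') (mem_Qset g he 0)
    · exact Finset.disjoint_left.mp (d19 g) (g.L_subset e he u hu hb') (mem_Qset g he 1)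
  have hq2 : ({g.q e 0, g.q e 1} : Finset g.VH).card = 2 := by
    rw [Finset.card_insert_of_notMem (by simp [q_ne g he (by simp : (0 : Fin 2) ≠ 1)]),
      Finset.card_singleton]
  rw [Finset.card_union_of_disjoint h3, Finset.card_union_of_disjoint h2,
    Finset.card_union_of_disjoint h1, g.card_Y e he, g.card_L e he u hu, hq2]
  have := g.card_Z e he
  omega

lemma card_Tq (g : Gadget V G wt) {e : Sym2 V} (he : e ∈ G.edgeFinset) (h' : Fin 2) :
    (g.Z e ∪ (Finset.univ.filter (· ∈ e)).biUnion (g.L e) ∪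
      (Finset.univ.filter (· ∈ e)).image (g.x e) ∪ {g.q e h'}).card = numColors G wt := by
  obtain ⟨u, v, hne, huv, hfil⟩ := ends he
  have hu : u ∈ e := by rw [huv]; exact Sym2.mem_mk_left u v
  have hv : v ∈ e := by rw [huv]; exact Sym2.mem_mk_right u v
  rw [hfil]
  have hbi : ({u, v} : Finset V).biUnion (g.L e) = g.L e u ∪ g.L e v := by
    rw [Finset.biUnion_insert, Finset.singleton_biUnion]
  have him : ({u, v} : Finset V).image (g.x e) = {g.x e u, g.x e v} := by
    rw [Finset.image_insert, Finset.image_singleton]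
  rw [hbi, him]
  have hLL : Disjoint (g.L e u) (g.L e v) :=
    g.L_disjoint e he u hu e he v hv (by simp [hne])
  have h1 : Disjoint (g.Z e) (g.L e u ∪ g.L e v) := by
    rw [Finset.disjoint_union_right]
    exact ⟨mkdisj fun b hb hb' => Finset.disjoint_left.mp (d18 g)
        (g.L_subset e he u hu hb') (mem_Zset g he hb),
      mkdisj fun b hb hb' => Finset.disjoint_left.mp (d18 g)
        (g.L_subset e he v hv hb') (mem_Zset g he hb)⟩
  have h2 : Disjoint (g.Z e ∪ (g.L e u ∪ g.L e v)) ({g.x e u, g.x e v} : Finset g.VH) := by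
    refine mkdisj fun b hb hb' => ?_
    simp only [Finset.mem_insert, Finset.mem_singleton] at hb'
    simp only [Finset.mem_union] at hb
    have hbX : b ∈ g.toGadgetData.Xset := by
      rcases hb' with rfl | rfl
      exacts [mem_Xset g he hu, mem_Xset g he hv]
    rcases hb with hb | hb | hb
    · exact Finset.disjoint_left.mp (d68 g) hbX (mem_Zset g he hb)
    · exact Finset.disjoint_left.mp (d16 g) (g.L_subset e he u hu hb) hbX
    · exact Finset.disjoint_left.mp (d16 g) (g.L_subset e he v hv hb) hbX
  have h3 : Disjoint (g.Z e ∪ (g.L e u ∪ g.L e v) ∪ {g.x e u, g.x e v})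
      ({g.q e h'} : Finset g.VH) := by
    refine mkdisj fun b hb hb' => ?_
    simp only [Finset.mem_singleton] at hb'
    subst hb'
    have hbQ := mem_Qset g he h'
    simp only [Finset.mem_union, Finset.mem_insert, Finset.mem_singleton] at hb
    rcases hb with (hb | hb | hb) | hb | hb
    · exact Finset.disjoint_left.mp (d89 g) (mem_Zset g he hb) hbQ
    · exact Finset.disjoint_left.mp (d19 g) (g.L_subset e he u hu hb) hbQ
    · exact Finset.disjoint_left.mp (d19 g) (g.L_subset e he v hv hb) hbQ
    · exact Finset.disjoint_left.mp (d69 g) (hb ▸ mem_Xset g he hu) hbQ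
    · exact Finset.disjoint_left.mp (d69 g) (hb ▸ mem_Xset g he hv) hbQ
  have hx2 : ({g.x e u, g.x e v} : Finset g.VH).card = 2 := by
    rw [Finset.card_insert_of_notMem (by simp [x_ne g he hu hv hne]), Finset.card_singleton]
  rw [Finset.card_union_of_disjoint h3, Finset.card_union_of_disjoint h2,
    Finset.card_union_of_disjoint h1, Finset.card_union_of_disjoint hLL,
    g.card_L e he u hu, g.card_L e he v hv, hx2, Finset.card_singleton]
  have := g.card_Z e he
  omega

lemma card_Qset (g : Gadget V G wt) : g.toGadgetData.Qset.card = 2 * G.edgeFinset.card := by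
  unfold GadgetData.Qset
  have hdisj : ∀ e ∈ G.edgeFinset, ∀ e' ∈ G.edgeFinset, e ≠ e' →
      Disjoint ({g.q e 0, g.q e 1} : Finset g.VH) {g.q e' 0, g.q e' 1} := by
    intro e he e' he' hne
    refine mkdisj fun b hb hb' => ?_
    simp only [Finset.mem_insert, Finset.mem_singleton] at hb hb'
    apply hne
    rcases hb with rfl | rfl <;> rcases hb' with hb' | hb' <;>
      simpa using (Prod.ext_iff.mp (g.q_inj e he _ e' he' _ hb')).1
  have hcc : ∀ e ∈ G.edgeFinset, ({g.q e 0, g.q e 1} : Finset g.VH).card = 2 := by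
    intro e he
    rw [Finset.card_insert_of_notMem (by simp [q_ne g he (by simp : (0 : Fin 2) ≠ 1)]),
      Finset.card_singleton]
  rw [Finset.card_biUnion hdisj, Finset.sum_congr rfl hcc, Finset.sum_const, smul_eq_mul,
    mul_comm]

lemma card_Xset (g : Gadget V G wt) : g.toGadgetData.Xset.card = 2 * G.edgeFinset.card := by
  unfold GadgetData.Xset
  have hdisj : ∀ e ∈ G.edgeFinset, ∀ e' ∈ G.edgeFinset, e ≠ e' →
      Disjoint ((Finset.univ.filter (· ∈ e)).image (g.x e))
        ((Finset.univ.filter (· ∈ e')).image (g.x e')) := by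
    intro e he e' he' hne
    refine mkdisj fun b hb hb' => ?_
    simp only [Finset.mem_image, Finset.mem_filter, Finset.mem_univ, true_and] at hb hb'
    obtain ⟨w, hw, rfl⟩ := hb
    obtain ⟨w', hw', hb'⟩ := hb'
    have hee : e' = e := by simpa using (Prod.ext_iff.mp (g.x_inj e' he' w' hw' e he w hw hb')).1
    exact hne hee.symm
  have hcc : ∀ e ∈ G.edgeFinset, ((Finset.univ.filter (· ∈ e)).image (g.x e)).card = 2 := by
    intro e he
    obtain ⟨u, v, hne, huv, hfil⟩ := ends he
    have hu : u ∈ e := by rw [huv]; exact Sym2.mem_mk_left u v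
    have hv : v ∈ e := by rw [huv]; exact Sym2.mem_mk_right u v
    rw [hfil, Finset.image_insert, Finset.image_singleton,
      Finset.card_insert_of_notMem (by simp [x_ne g he hu hv hne]), Finset.card_singleton]
  rw [Finset.card_biUnion hdisj, Finset.sum_congr rfl hcc, Finset.sum_const, smul_eq_mul,
    mul_comm]

lemma card_bigSet (g : Gadget V G wt) :
    g.toGadgetData.bigSet.card = numColors G wt + G.edgeFinset.card := by
  unfold GadgetData.bigSet
  have h1 : Disjoint ({g.sstar} : Finset g.VH) (Finset.univ.image g.orig) := d04 g
  have h2 : Disjoint ({g.sstar} ∪ Finset.univ.image g.orig) g.toGadgetData.Qset := by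
    rw [Finset.disjoint_union_left]; exact ⟨d09 g, d49 g⟩
  have h3 : Disjoint ({g.sstar} ∪ Finset.univ.image g.orig ∪ g.toGadgetData.Qset)
      g.Acenters := by
    rw [Finset.disjoint_union_left, Finset.disjoint_union_left]
    exact ⟨⟨d02 g, (d24 g).symm⟩, (d29 g).symm⟩
  have h4 : Disjoint ({g.sstar} ∪ Finset.univ.image g.orig ∪ g.toGadgetData.Qset ∪ g.Acenters)
      g.toGadgetData.Xset := by
    rw [Finset.disjoint_union_left, Finset.disjoint_union_left, Finset.disjoint_union_left]
    exact ⟨⟨⟨d06 g, d46 g⟩, (d69 g).symm⟩, d26 g⟩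
  rw [Finset.card_union_of_disjoint h4, Finset.card_union_of_disjoint h3,
    Finset.card_union_of_disjoint h2, Finset.card_union_of_disjoint h1,
    Finset.card_singleton, Finset.card_image_of_injective _ g.orig_inj, Finset.card_univ,
    card_Qset g, card_Xset g, g.card_Acenters]
  unfold numColors
  omega

lemma bvertex_in_bigSet (g : Gadget V G wt) {c : g.VH → Fin (numColors G wt)} {a : g.VH}
    (hb : IsBVertex g.H c a) (hk : 7 ≤ numColors G wt) : a ∈ g.toGadgetData.bigSet := by
  by_contra ha
  obtain ⟨T, hT5, hTn⟩ := small_nbhd g ha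
  have h1 := bvertex_le_card hb T hTn
  have h2 := Finset.card_image_le (s := T) (f := c)
  omega

lemma no_big_fail (g : Gadget V G wt) {c : g.VH → Fin (numColors G wt)}
    (hc : IsBColoring g.H (numColors G wt) c) (hk : 7 ≤ numColors G wt)
    (F : Finset g.VH) (hFsub : F ⊆ g.toGadgetData.bigSet)
    (hFb : ∀ a ∈ F, ¬ IsBVertex g.H c a) (hFcard : G.edgeFinset.card + 1 ≤ F.card) :
    False := by
  obtain ⟨hprop, hsur, hbv⟩ := hc
  choose f hf1 hf2 using hbv
  have hfinj : Function.Injective f := fun a b hab => by rw [← hf1 a, ← hf1 b, hab]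
  have hsub : Finset.univ.image f ⊆ g.toGadgetData.bigSet \ F := by
    intro a ha'
    obtain ⟨col, _, rfl⟩ := Finset.mem_image.mp ha'
    exact Finset.mem_sdiff.mpr ⟨bvertex_in_bigSet g (hf2 col) hk,
      fun hF => hFb _ hF (hf2 col)⟩
  have h1 : (Finset.univ.image f).card = numColors G wt := by
    rw [Finset.card_image_of_injective _ hfinj, Finset.card_univ, Fintype.card_fin]
  have h2 := Finset.card_le_card hsub
  rw [Finset.card_sdiff_of_subset hFsub, card_bigSet g] at h2
  omega

/-- the four special vertices of an edge -/
def specials (g : Gadget V G wt) (e : Sym2 V) : Finset g.VH :=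
  (Finset.univ.filter (· ∈ e)).image (g.x e) ∪ {g.q e 0, g.q e 1}

lemma specials_subset (g : Gadget V G wt) {e : Sym2 V} (he : e ∈ G.edgeFinset) :
    specials g e ⊆ g.toGadgetData.bigSet := by
  intro a ha
  unfold specials at ha
  unfold GadgetData.bigSet
  simp only [Finset.mem_union, Finset.mem_image, Finset.mem_filter, Finset.mem_univ, true_and,
    Finset.mem_insert, Finset.mem_singleton] at ha ⊢
  rcases ha with ⟨w, hw, rfl⟩ | rfl | rfl
  · exact Or.inr (mem_Xset g he hw)
  · exact Or.inl (Or.inl (Or.inr (mem_Qset g he 0)))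
  · exact Or.inl (Or.inl (Or.inr (mem_Qset g he 1)))

lemma specials_disjoint (g : Gadget V G wt) {e e' : Sym2 V} (he : e ∈ G.edgeFinset)
    (he' : e' ∈ G.edgeFinset) (hne : e ≠ e') : Disjoint (specials g e) (specials g e') := by
  refine mkdisj fun b hb hb' => ?_
  unfold specials at hb hb'
  simp only [Finset.mem_union, Finset.mem_image, Finset.mem_filter, Finset.mem_univ, true_and,
    Finset.mem_insert, Finset.mem_singleton] at hb hb'
  rcases hb with ⟨w, hw, rfl⟩ | rfl | rfl
  · rcases hb' with ⟨w', hw', hb'⟩ | hb' | hb'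
    · exact hne (Prod.ext_iff.mp (g.x_inj e he w hw e' he' w' hw' hb'.symm)).1
    · exact Finset.disjoint_left.mp (d69 g) (mem_Xset g he hw) (hb' ▸ mem_Qset g he' 0)
    · exact Finset.disjoint_left.mp (d69 g) (mem_Xset g he hw) (hb' ▸ mem_Qset g he' 1)
  · rcases hb' with ⟨w', hw', hb'⟩ | hb' | hb'
    · exact Finset.disjoint_left.mp (d69 g) (mem_Xset g he' hw') (hb' ▸ mem_Qset g he 0)
    · exact hne (Prod.ext_iff.mp (g.q_inj e he 0 e' he' 0 hb')).1
    · exact hne (Prod.ext_iff.mp (g.q_inj e he 0 e' he' 1 hb')).1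
  · rcases hb' with ⟨w', hw', hb'⟩ | hb' | hb'
    · exact Finset.disjoint_left.mp (d69 g) (mem_Xset g he' hw') (hb' ▸ mem_Qset g he 1)
    · exact hne (Prod.ext_iff.mp (g.q_inj e he 1 e' he' 0 hb')).1
    · exact hne (Prod.ext_iff.mp (g.q_inj e he 1 e' he' 1 hb')).1

lemma mem_specials_x (g : Gadget V G wt) {e : Sym2 V} {u : V} (hu : u ∈ e) :
    g.x e u ∈ specials g e :=
  Finset.mem_union_left _ (Finset.mem_image.mpr ⟨u, by simp [hu], rfl⟩)

lemma mem_specials_q (g : Gadget V G wt) {e : Sym2 V} (h : Fin 2) :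
    g.q e h ∈ specials g e := by
  refine Finset.mem_union_right _ ?_
  fin_cases h <;> simp

lemma image_drop2 {α β : Type*} [DecidableEq α] [DecidableEq β] {M : Finset α} {c : α → β}
    {a1 b1 a2 b2 : α} (ha1 : a1 ∈ M) (hb1 : b1 ∈ M) (ha2 : a2 ∈ M) (hb2 : b2 ∈ M)
    (h1 : c a1 = c b1) (h2 : c a2 = c b2) (hb12 : b1 ≠ b2)
    (ha1b : a1 ∉ ({b1, b2} : Finset α)) (ha2b : a2 ∉ ({b1, b2} : Finset α)) :
    (M.image c).card + 2 ≤ M.card := by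
  have himg : M.image c = (M \ {b1, b2}).image c := by
    apply Finset.Subset.antisymm ?_ (Finset.image_subset_image Finset.sdiff_subset)
    intro col hcol
    obtain ⟨w, hw, rfl⟩ := Finset.mem_image.mp hcol
    by_cases hw1 : w = b1
    · exact Finset.mem_image.mpr ⟨a1, Finset.mem_sdiff.mpr ⟨ha1, ha1b⟩, by rw [h1, hw1]⟩
    by_cases hw2 : w = b2
    · exact Finset.mem_image.mpr ⟨a2, Finset.mem_sdiff.mpr ⟨ha2, ha2b⟩, by rw [h2, hw2]⟩
    · exact Finset.mem_image.mpr ⟨w, Finset.mem_sdiff.mpr ⟨hw, by simp [hw1, hw2]⟩, rfl⟩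
  have hsub : ({b1, b2} : Finset α) ⊆ M := by
    intro z hz
    simp only [Finset.mem_insert, Finset.mem_singleton] at hz
    rcases hz with rfl | rfl
    exacts [hb1, hb2]
  have hc2 : ({b1, b2} : Finset α).card = 2 := by
    rw [Finset.card_insert_of_notMem (by simp [hb12]), Finset.card_singleton]
  have hcard : (M \ {b1, b2}).card = M.card - 2 := by rw [Finset.card_sdiff_of_subset hsub, hc2]
  have h3 := Finset.card_image_le (s := M \ {b1, b2}) (f := c)
  have h4 := Finset.card_le_card hsub
  rw [himg]
  omega

/-- closed neighbourhood set of `x e u` -/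
def Tx (g : Gadget V G wt) (e : Sym2 V) (u : V) : Finset g.VH :=
  g.Y e ∪ g.Z e ∪ g.L e u ∪ {g.q e 0, g.q e 1}

/-- neighbourhood set of `q e h` (with `h'` the other index) -/
def Mq (g : Gadget V G wt) (e : Sym2 V) (h' : Fin 2) : Finset g.VH :=
  g.Z e ∪ (Finset.univ.filter (· ∈ e)).biUnion (g.L e) ∪
    (Finset.univ.filter (· ∈ e)).image (g.x e) ∪ {g.q e h'}

lemma Tx_adj (g : Gadget V G wt) {e : Sym2 V} (he : e ∈ G.edgeFinset) {u : V} (hu : u ∈ e) :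
    ∀ b ∈ Tx g e u, g.H.Adj (g.x e u) b := by
  intro b hb
  simp only [Tx, Finset.mem_union, Finset.mem_insert, Finset.mem_singleton] at hb
  rcases hb with ((hb | hb) | hb) | hb | hb
  · exact adj_x_mem g he hu (Or.inl hb)
  · exact adj_x_mem g he hu (Or.inr (Or.inl hb))
  · exact adj_x_mem g he hu (Or.inr (Or.inr hb))
  · subst hb; exact adj_x_q g he hu 0
  · subst hb; exact adj_x_q g he hu 1

lemma Mq_adj (g : Gadget V G wt) {e : Sym2 V} (he : e ∈ G.edgeFinset) {h h' : Fin 2}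
    (hne : h ≠ h') : ∀ b ∈ Mq g e h', g.H.Adj (g.q e h) b := by
  intro b hb
  simp only [Mq, Finset.mem_union, Finset.mem_biUnion, Finset.mem_image, Finset.mem_filter,
    Finset.mem_univ, true_and, Finset.mem_singleton] at hb
  rcases hb with ((hb | ⟨w, hw, hb⟩) | ⟨w, hw, hb⟩) | hb
  · exact adj_q_ZL g he h (Or.inl hb)
  · exact adj_q_ZL g he h (Or.inr ⟨w, hw, hb⟩)
  · subst hb; exact (adj_x_q g he hw h).symm
  · subst hb; exact adj_q_q g he hne

lemma mem_Tx_L (g : Gadget V G wt) {e : Sym2 V} {u : V} {b : g.VH} (hb : b ∈ g.L e u) :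
    b ∈ Tx g e u :=
  Finset.mem_union_left _ (Finset.mem_union_right _ hb)

lemma mem_Mq_L (g : Gadget V G wt) {e : Sym2 V} {u : V} (hu : u ∈ e) (h' : Fin 2) {b : g.VH}
    (hb : b ∈ g.L e u) : b ∈ Mq g e h' :=
  Finset.mem_union_left _ (Finset.mem_union_left _ (Finset.mem_union_right _
    (Finset.mem_biUnion.mpr ⟨u, by simp [hu], hb⟩)))

lemma mem_Mq_x (g : Gadget V G wt) {e : Sym2 V} {u : V} (hu : u ∈ e) (h' : Fin 2) :
    g.x e u ∈ Mq g e h' :=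
  Finset.mem_union_left _ (Finset.mem_union_right _
    (Finset.mem_image.mpr ⟨u, by simp [hu], rfl⟩))

lemma not_all_four (g : Gadget V G wt) {c : g.VH → Fin (numColors G wt)}
    (hc : IsBColoring g.H (numColors G wt) c) {e : Sym2 V} (he : e ∈ G.edgeFinset)
    (hw : 1 ≤ wt e) : ∃ a ∈ specials g e, ¬ IsBVertex g.H c a := by
  obtain ⟨hprop, hsur, hbv⟩ := hc
  by_contra hall
  push_neg at hall
  obtain ⟨u, v, huvne, huv, hfil⟩ := ends he
  have hu : u ∈ e := by rw [huv]; exact Sym2.mem_mk_left u v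
  have hv : v ∈ e := by rw [huv]; exact Sym2.mem_mk_right u v
  have hbxu := hall _ (mem_specials_x g hu)
  have hbxv := hall _ (mem_specials_x g hv)
  have hbq0 := hall _ (mem_specials_q g 0)
  -- rainbow neighbourhoods of the two x vertices
  have hTu_inj : Set.InjOn c (Tx g e u) :=
    bvertex_injOn hprop hbxu _ (fun b hb => nbhd_x g he hu hb) (Tx_adj g he hu) (card_Tx g he hu)
  have hTu_img : (Tx g e u).image c = Finset.univ.erase (c (g.x e u)) :=
    bvertex_image_eq hprop hbxu _ (fun b hb => nbhd_x g he hu hb) (Tx_adj g he hu)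
  have hTv_img : (Tx g e v).image c = Finset.univ.erase (c (g.x e v)) :=
    bvertex_image_eq hprop hbxv _ (fun b hb => nbhd_x g he hv hb) (Tx_adj g he hv)
  -- neighbourhood of q e 0
  have h01 : (0 : Fin 2) ≠ 1 := by simp
  have hM_img : (Mq g e 1).image c = Finset.univ.erase (c (g.q e 0)) :=
    bvertex_image_eq hprop hbq0 _ (fun b hb => nbhd_q g he h01 hb) (Mq_adj g he h01)
  have hM_card : (Mq g e 1).card = numColors G wt := card_Tq g he 1
  have hk2 : 2 ≤ numColors G wt := by unfold numColors; omega
  have hfinal : ((Mq g e 1).image c).card = numColors G wt - 1 := by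
    rw [hM_img, Finset.card_erase_of_mem (Finset.mem_univ _), Finset.card_univ,
      Fintype.card_fin]
  -- x e u and x e v are not in any L set (they are in Xset)
  have hxnotL : ∀ w : V, w ∈ e → ∀ w' : V, w' ∈ e → g.x e w ∉ g.L e w' := fun w hw' w' hw'' h =>
    Finset.disjoint_left.mp (d16 g) (g.L_subset e he w' hw'' h) (mem_Xset g he hw')
  by_cases hx : c (g.x e u) = c (g.x e v)
  · -- equal colours: collide (xu, xv) and (a, b') with a ∈ L e u, b' ∈ L e v
    have hLune : (g.L e u).Nonempty := by
      rw [← Finset.card_pos, g.card_L e he u hu]; omega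
    obtain ⟨a, haL⟩ := hLune
    have haTu : a ∈ Tx g e u := mem_Tx_L g haL
    have hγ : c a ∈ (Tx g e v).image c := by
      rw [hTv_img]
      have h1 : c a ∈ (Tx g e u).image c := Finset.mem_image_of_mem c haTu
      rw [hTu_img, hx] at h1
      exact h1
    obtain ⟨b', hb'Tv, hcb'⟩ := Finset.mem_image.mp hγ
    have hb'L : b' ∈ g.L e v := by
      simp only [Tx, Finset.mem_union, Finset.mem_insert, Finset.mem_singleton] at hb'Tv
      rcases hb'Tv with ((hb' | hb') | hb') | hb' | hb'
      · have : b' = a := hTu_inj (by simp [Tx, Finset.mem_union, hb'])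
          (by exact haTu) hcb'
        subst this
        exact absurd (g.L_subset e he u hu haL)
          (Finset.disjoint_right.mp (d17 g) (mem_Yset g he hb'))
      · have : b' = a := hTu_inj (by simp [Tx, Finset.mem_union, hb']) haTu hcb'
        subst this
        exact absurd (g.L_subset e he u hu haL)
          (Finset.disjoint_right.mp (d18 g) (mem_Zset g he hb'))
      · exact hb'
      · have : b' = a := hTu_inj (by simp [Tx, Finset.mem_union, hb']) haTu hcb'
        subst this
        exact absurd (g.L_subset e he u hu haL)
          (Finset.disjoint_right.mp (d19 g) (hb' ▸ mem_Qset g he 0))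
      · have : b' = a := hTu_inj (by simp [Tx, Finset.mem_union, hb']) haTu hcb'
        subst this
        exact absurd (g.L_subset e he u hu haL)
          (Finset.disjoint_right.mp (d19 g) (hb' ▸ mem_Qset g he 1))
    have hdrop := image_drop2 (M := Mq g e 1) (c := c)
      (mem_Mq_x g hu 1) (mem_Mq_x g hv 1) (mem_Mq_L g hu 1 haL) (mem_Mq_L g hv 1 hb'L)
      hx hcb'.symm
      (fun h => hxnotL v hv v hv (h ▸ hb'L))
      (by
        simp only [Finset.mem_insert, Finset.mem_singleton, not_or]
        exact ⟨x_ne g he hu hv huvne, fun h => hxnotL u hu v hv (h ▸ hb'L)⟩)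
      (by
        simp only [Finset.mem_insert, Finset.mem_singleton, not_or]
        refine ⟨fun h => hxnotL v hv u hu (h ▸ haL), fun h => ?_⟩
        subst h
        exact Finset.disjoint_left.mp
          (g.L_disjoint e he u hu e he v hv (by simp [huvne])) haL hb'L)
    omega
  · -- different colours: collide (xv, b1) and (xu, b2), b1 ∈ L e u, b2 ∈ L e v
    have h1 : c (g.x e v) ∈ (Tx g e u).image c := by
      rw [hTu_img]
      exact Finset.mem_erase.mpr ⟨fun h => hx h.symm, Finset.mem_univ _⟩
    obtain ⟨b1, hb1Tu, hcb1⟩ := Finset.mem_image.mp h1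
    have hb1L : b1 ∈ g.L e u := by
      simp only [Tx, Finset.mem_union, Finset.mem_insert, Finset.mem_singleton] at hb1Tu
      rcases hb1Tu with ((hb' | hb') | hb') | hb' | hb'
      · exact absurd hcb1.symm (hprop (adj_x_mem g he hv (Or.inl hb')))
      · exact absurd hcb1.symm (hprop (adj_x_mem g he hv (Or.inr (Or.inl hb'))))
      · exact hb'
      · subst hb'; exact absurd hcb1.symm (hprop (adj_x_q g he hv 0))
      · subst hb'; exact absurd hcb1.symm (hprop (adj_x_q g he hv 1))
    have h2 : c (g.x e u) ∈ (Tx g e v).image c := by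
      rw [hTv_img]
      exact Finset.mem_erase.mpr ⟨hx, Finset.mem_univ _⟩
    obtain ⟨b2, hb2Tv, hcb2⟩ := Finset.mem_image.mp h2
    have hb2L : b2 ∈ g.L e v := by
      simp only [Tx, Finset.mem_union, Finset.mem_insert, Finset.mem_singleton] at hb2Tv
      rcases hb2Tv with ((hb' | hb') | hb') | hb' | hb'
      · exact absurd hcb2.symm (hprop (adj_x_mem g he hu (Or.inl hb')))
      · exact absurd hcb2.symm (hprop (adj_x_mem g he hu (Or.inr (Or.inl hb'))))
      · exact hb'
      · subst hb'; exact absurd hcb2.symm (hprop (adj_x_q g he hu 0))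
      · subst hb'; exact absurd hcb2.symm (hprop (adj_x_q g he hu 1))
    have hb12 : b1 ≠ b2 := fun h => hx (by rw [← hcb1, h, hcb2])
    have hdrop := image_drop2 (M := Mq g e 1) (c := c)
      (mem_Mq_x g hv 1) (mem_Mq_L g hu 1 hb1L) (mem_Mq_x g hu 1) (mem_Mq_L g hv 1 hb2L)
      hcb1.symm hcb2.symm hb12
      (by
        simp only [Finset.mem_insert, Finset.mem_singleton, not_or]
        exact ⟨fun h => hxnotL v hv u hu (h ▸ hb1L), fun h => hxnotL v hv v hv (h ▸ hb2L)⟩)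
      (by
        simp only [Finset.mem_insert, Finset.mem_singleton, not_or]
        exact ⟨fun h => hxnotL u hu u hu (h ▸ hb1L), fun h => hxnotL u hu v hv (h ▸ hb2L)⟩)
    omega

lemma orig_in_bigSet (g : Gadget V G wt) (v : V) : g.orig v ∈ g.toGadgetData.bigSet := by
  unfold GadgetData.bigSet
  simp only [Finset.mem_union]
  exact Or.inl (Or.inl (Or.inl (Or.inr (mem_origSet g v))))

lemma q_in_bigSet (g : Gadget V G wt) {e : Sym2 V} (he : e ∈ G.edgeFinset) (h : Fin 2) :
    g.q e h ∈ g.toGadgetData.bigSet := by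
  unfold GadgetData.bigSet
  simp only [Finset.mem_union]
  exact Or.inl (Or.inl (Or.inr (mem_Qset g he h)))

lemma orig_bvertex (g : Gadget V G wt) {c : g.VH → Fin (numColors G wt)}
    (hc : IsBColoring g.H (numColors G wt) c) (hk : 7 ≤ numColors G wt)
    (hwt : ∀ e ∈ G.edgeFinset, 1 ≤ wt e) (v : V) : IsBVertex g.H c (g.orig v) := by
  by_contra hnb
  have hfail : ∀ e : {e // e ∈ G.edgeFinset}, ∃ a ∈ specials g e.1, ¬IsBVertex g.H c a :=
    fun e => not_all_four g hc e.2 (hwt e.1 e.2)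
  choose fl hfl1 hfl2 using hfail
  set F0 := G.edgeFinset.attach.image fl with hF0
  have hF0card : F0.card = G.edgeFinset.card := by
    rw [hF0, Finset.card_image_of_injOn, Finset.card_attach]
    intro e _ e' _ hee
    by_contra hne
    have hne' : e.1 ≠ e'.1 := fun h => hne (Subtype.ext h)
    exact Finset.disjoint_left.mp (specials_disjoint g e.2 e'.2 hne') (hfl1 e)
      (hee ▸ hfl1 e')
  have horig_not : g.orig v ∉ F0 := by
    intro h
    obtain ⟨e, _, heq⟩ := Finset.mem_image.mp h
    have h2 := hfl1 e
    rw [heq] at h2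
    unfold specials at h2
    simp only [Finset.mem_union, Finset.mem_image, Finset.mem_filter, Finset.mem_univ,
      true_and, Finset.mem_insert, Finset.mem_singleton] at h2
    rcases h2 with ⟨w, hw, h2⟩ | h2 | h2
    · exact Finset.disjoint_left.mp (d46 g) (mem_origSet g v) (h2 ▸ mem_Xset g e.2 hw)
    · exact Finset.disjoint_left.mp (d49 g) (mem_origSet g v) (h2 ▸ mem_Qset g e.2 0)
    · exact Finset.disjoint_left.mp (d49 g) (mem_origSet g v) (h2 ▸ mem_Qset g e.2 1)
  refine no_big_fail g hc hk (insert (g.orig v) F0) ?_ ?_ ?_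
  · intro a ha
    rcases Finset.mem_insert.mp ha with rfl | ha
    · exact orig_in_bigSet g v
    · obtain ⟨e, _, heq⟩ := Finset.mem_image.mp ha
      exact heq ▸ specials_subset g e.2 (hfl1 e)
  · intro a ha
    rcases Finset.mem_insert.mp ha with rfl | ha
    · exact hnb
    · obtain ⟨e, _, heq⟩ := Finset.mem_image.mp ha
      exact heq ▸ hfl2 e
  · rw [Finset.card_insert_of_notMem horig_not, hF0card]

lemma exists_q_bvertex (g : Gadget V G wt) {c : g.VH → Fin (numColors G wt)}
    (hc : IsBColoring g.H (numColors G wt) c) (hk : 7 ≤ numColors G wt)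
    (hwt : ∀ e ∈ G.edgeFinset, 1 ≤ wt e) {e : Sym2 V} (he : e ∈ G.edgeFinset) :
    ∃ h : Fin 2, IsBVertex g.H c (g.q e h) := by
  by_contra hq
  push_neg at hq
  have hfail : ∀ e' : {e' // e' ∈ G.edgeFinset.erase e},
      ∃ a ∈ specials g e'.1, ¬IsBVertex g.H c a :=
    fun e' => not_all_four g hc (Finset.mem_of_mem_erase e'.2)
      (hwt e'.1 (Finset.mem_of_mem_erase e'.2))
  choose fl hfl1 hfl2 using hfail
  set F0 := (G.edgeFinset.erase e).attach.image fl with hF0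
  have hF0card : F0.card = (G.edgeFinset.erase e).card := by
    rw [hF0, Finset.card_image_of_injOn, Finset.card_attach]
    intro e1 _ e2 _ hee
    by_contra hne
    have hne' : e1.1 ≠ e2.1 := fun h => hne (Subtype.ext h)
    exact Finset.disjoint_left.mp (specials_disjoint g (Finset.mem_of_mem_erase e1.2)
      (Finset.mem_of_mem_erase e2.2) hne') (hfl1 e1) (hee ▸ hfl1 e2)
  have hqnot : ∀ hh : Fin 2, g.q e hh ∉ F0 := by
    intro hh h
    obtain ⟨e', _, heq⟩ := Finset.mem_image.mp h
    have hne' : e'.1 ≠ e := (Finset.mem_erase.mp e'.2).1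
    exact Finset.disjoint_left.mp
      (specials_disjoint g (Finset.mem_of_mem_erase e'.2) he hne')
      (hfl1 e') (heq ▸ mem_specials_q g hh)
  have hq01 : g.q e 0 ∉ insert (g.q e 1) F0 := by
    simp only [Finset.mem_insert, not_or]
    exact ⟨q_ne g he (by simp : (0 : Fin 2) ≠ 1), hqnot 0⟩
  refine no_big_fail g hc hk (insert (g.q e 0) (insert (g.q e 1) F0)) ?_ ?_ ?_
  · intro a ha
    rcases Finset.mem_insert.mp ha with rfl | ha
    · exact q_in_bigSet g he 0
    rcases Finset.mem_insert.mp ha with rfl | ha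
    · exact q_in_bigSet g he 1
    obtain ⟨e', _, heq⟩ := Finset.mem_image.mp ha
    exact heq ▸ specials_subset g (Finset.mem_of_mem_erase e'.2) (hfl1 e')
  · intro a ha
    rcases Finset.mem_insert.mp ha with rfl | ha
    · exact hq 0
    rcases Finset.mem_insert.mp ha with rfl | ha
    · exact hq 1
    obtain ⟨e', _, heq⟩ := Finset.mem_image.mp ha
    exact heq ▸ hfl2 e'
  · rw [Finset.card_insert_of_notMem hq01, Finset.card_insert_of_notMem (hqnot 1),
      hF0card, Finset.card_erase_of_mem he]
    have : 1 ≤ G.edgeFinset.card := Finset.card_pos.mpr ⟨e, he⟩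
    omega

lemma LY_colors (g : Gadget V G wt) {c : g.VH → Fin (numColors G wt)}
    (hprop : ∀ ⦃a b : g.VH⦄, g.H.Adj a b → c a ≠ c b) {e : Sym2 V} (he : e ∈ G.edgeFinset)
    {u v : V} (hu : u ∈ e) (hv : v ∈ e) (hne : v ≠ u)
    (hfil : Finset.univ.filter (· ∈ e) = {u, v})
    (hbx : IsBVertex g.H c (g.x e u)) {h : Fin 2} (hbq : IsBVertex g.H c (g.q e h)) :
    ((g.L e v ∪ g.Y e).image c).card ≤ wt e := by
  have hTu_inj : Set.InjOn c (Tx g e u) :=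
    bvertex_injOn hprop hbx _ (fun b hb => nbhd_x g he hu hb) (Tx_adj g he hu)
      (card_Tx g he hu)
  have hTu_img : (Tx g e u).image c = Finset.univ.erase (c (g.x e u)) :=
    bvertex_image_eq hprop hbx _ (fun b hb => nbhd_x g he hu hb) (Tx_adj g he hu)
  have hqT : ∀ hh : Fin 2, g.q e hh ∈ Tx g e u := fun hh =>
    Finset.mem_union_right _ (by fin_cases hh <;> simp)
  set h' : Fin 2 := if h = 0 then 1 else 0 with hh'
  have hne' : h ≠ h' := by fin_cases h <;> simp [hh']
  have hM_img : (Mq g e h').image c = Finset.univ.erase (c (g.q e h)) :=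
    bvertex_image_eq hprop hbq _ (fun b hb => nbhd_q g he hne' hb) (Mq_adj g he hne')
  have hYL : (g.Y e).image c ⊆ (g.L e v).image c := by
    intro γ hγ
    obtain ⟨y, hy, rfl⟩ := Finset.mem_image.mp hγ
    have hyTu : y ∈ Tx g e u :=
      Finset.mem_union_left _ (Finset.mem_union_left _ (Finset.mem_union_left _ hy))
    have hyq : c y ≠ c (g.q e h) := by
      intro hcy
      have hyq' : y = g.q e h := hTu_inj hyTu (hqT h) hcy
      exact Finset.disjoint_left.mp (d79 g) (mem_Yset g he hy) (hyq' ▸ mem_Qset g he h)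
    have hcy : c y ∈ (Mq g e h').image c := by
      rw [hM_img]; exact Finset.mem_erase.mpr ⟨hyq, Finset.mem_univ _⟩
    obtain ⟨w, hw, hcw⟩ := Finset.mem_image.mp hcy
    simp only [Mq, Finset.mem_union, Finset.mem_biUnion, Finset.mem_image, Finset.mem_filter,
      Finset.mem_univ, true_and, Finset.mem_singleton] at hw
    rcases hw with ((hw | ⟨z, hz, hw⟩) | ⟨z, hz, hw⟩) | hw
    · have hwy : w = y := hTu_inj
        (Finset.mem_union_left _ (Finset.mem_union_left _ (Finset.mem_union_right _ hw)))
        hyTu hcw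
      subst hwy
      exact absurd (mem_Zset g he hw) (Finset.disjoint_left.mp (d78 g) (mem_Yset g he hy)) 
    · have hz2 : z = u ∨ z = v := by
        have : z ∈ ({u, v} : Finset V) := by rw [← hfil]; simp [hz]
        simpa using this
      rcases hz2 with rfl | rfl
      · have hwy : w = y := hTu_inj (mem_Tx_L g hw) hyTu hcw
        subst hwy
        exact absurd (g.L_subset e he z hz hw)
          (Finset.disjoint_right.mp (d17 g) (mem_Yset g he hy))
      · exact Finset.mem_image.mpr ⟨w, hw, hcw⟩
    · have hz2 : z = u ∨ z = v := by
        have : z ∈ ({u, v} : Finset V) := by rw [← hfil]; simp [hz]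
        simpa using this
      rcases hz2 with rfl | rfl
      · subst hw
        have : c y ∈ Finset.univ.erase (c (g.x e z)) := by
          rw [← hTu_img]; exact Finset.mem_image_of_mem c hyTu
        exact absurd hcw (Finset.ne_of_mem_erase this).symm
      · subst hw
        exact absurd hcw (hprop (adj_x_mem g he hz (Or.inl hy)))
    · subst hw
      have hwy : g.q e h' = y := hTu_inj (hqT h') hyTu hcw
      exact (Finset.disjoint_left.mp (d79 g) (mem_Yset g he hy)
        (hwy ▸ mem_Qset g he h')).elim
  have hYcard : ((g.Y e).image c).card = wt e := by
    rw [Finset.card_image_of_injOn (hTu_inj.mono (by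
      intro z hz
      exact Finset.mem_union_left _ (Finset.mem_union_left _ (Finset.mem_union_left _ hz)))),
      g.card_Y e he]
  have hLcard : ((g.L e v).image c).card ≤ wt e :=
    (Finset.card_image_le).trans (le_of_eq (g.card_L e he v hv))
  have heq : (g.L e v).image c = (g.Y e).image c :=
    (Finset.eq_of_subset_of_card_le hYL (by rw [hYcard]; exact hLcard)).symm
  rw [Finset.image_union, heq, Finset.union_self, hYcard]

lemma fil_pair {e : Sym2 V} (he : e ∈ G.edgeFinset) {u v : V} (hu : u ∈ e) (hv : v ∈ e)
    (hne : u ≠ v) : Finset.univ.filter (· ∈ e) = {u, v} := by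
  obtain ⟨a, b, hab, rfl, hfil⟩ := ends he
  rw [hfil]
  rw [Sym2.mem_iff] at hu hv
  rcases hu with rfl | rfl <;> rcases hv with rfl | rfl <;>
    first
      | exact absurd rfl hne
      | rfl
      | exact Finset.pair_comm _ _
      | exact (Finset.pair_comm _ _).symm

lemma count_at (g : Gadget V G wt) {c : g.VH → Fin (numColors G wt)}
    (hc : IsBColoring g.H (numColors G wt) c) (hk : 7 ≤ numColors G wt)
    (hwt : ∀ e ∈ G.edgeFinset, 1 ≤ wt e) {o : Sym2 V → V}
    (ho : ∀ e ∈ G.edgeFinset, o e ∈ e ∧ IsBVertex g.H c (g.x e (o e))) (v : V) :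
    vertW G wt v ≤ 2 * ∑ e ∈ G.edgeFinset.filter (fun e => v ∈ e ∧ o e = v), wt e := by
  have hprop := hc.1
  have hbo := orig_bvertex g hc hk hwt v
  set U : Finset g.VH := g.P v ∪
    (G.edgeFinset.filter (fun e => v ∈ e)).biUnion (fun e => g.L e v ∪ g.Y e) with hU
  have h1 : numColors G wt - 1 ≤ (U.image c).card :=
    bvertex_le_card hbo U (fun b hb => nbhd_orig g hb)
  have h2 : (U.image c).card ≤ (g.P v).card +
      ∑ e ∈ G.edgeFinset.filter (fun e => v ∈ e), ((g.L e v ∪ g.Y e).image c).card := by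
    rw [hU, Finset.image_union]
    refine (Finset.card_union_le _ _).trans (Nat.add_le_add Finset.card_image_le ?_)
    have himg : Finset.image c
        ((G.edgeFinset.filter (fun e => v ∈ e)).biUnion fun e => g.L e v ∪ g.Y e) =
        (G.edgeFinset.filter (fun e => v ∈ e)).biUnion
          (fun e => (g.L e v ∪ g.Y e).image c) := by
      ext col
      simp only [Finset.mem_image, Finset.mem_biUnion]
      constructor
      · rintro ⟨w, ⟨e, he, hw⟩, rfl⟩
        exact ⟨e, he, ⟨w, hw, rfl⟩⟩
      · rintro ⟨e, he, w, hw, rfl⟩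
        exact ⟨w, ⟨e, he, hw⟩, rfl⟩
    rw [himg]
    exact Finset.card_biUnion_le
  have h3 : ∀ e ∈ G.edgeFinset.filter (fun e => v ∈ e),
      ((g.L e v ∪ g.Y e).image c).card ≤ if o e = v then 2 * wt e else wt e := by
    intro e hef
    obtain ⟨he, hve⟩ := Finset.mem_filter.mp hef
    by_cases hoe : o e = v
    · rw [if_pos hoe]
      refine Finset.card_image_le.trans ((Finset.card_union_le _ _).trans ?_)
      rw [g.card_L e he v hve, g.card_Y e he]
      omega
    · rw [if_neg hoe]
      obtain ⟨hoee, hbx⟩ := ho e he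
      obtain ⟨h, hbq⟩ := exists_q_bvertex g hc hk hwt he
      have hvne : v ≠ o e := fun hh => hoe hh.symm
      exact LY_colors g hprop he hoee hve hvne (fil_pair he hoee hve hoe) hbx hbq
  have h4 := Finset.sum_le_sum h3
  have h5 : ∑ e ∈ G.edgeFinset.filter (fun e => v ∈ e), (if o e = v then 2 * wt e else wt e) =
      2 * (∑ e ∈ G.edgeFinset.filter (fun e => v ∈ e ∧ o e = v), wt e) +
        (vertW G wt v - ∑ e ∈ G.edgeFinset.filter (fun e => v ∈ e ∧ o e = v), wt e) := by
    rw [Finset.sum_ite]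
    have hf1 : (G.edgeFinset.filter (fun e => v ∈ e)).filter (fun e => o e = v) =
        G.edgeFinset.filter (fun e => v ∈ e ∧ o e = v) := by
      rw [Finset.filter_filter]
    have hf2 : (G.edgeFinset.filter (fun e => v ∈ e)).filter (fun e => ¬(o e = v)) =
        G.edgeFinset.filter (fun e => v ∈ e ∧ ¬(o e = v)) := by
      rw [Finset.filter_filter]
    rw [hf1, hf2, ← Finset.mul_sum]
    have hsplit : ∑ e ∈ G.edgeFinset.filter (fun e => v ∈ e ∧ o e = v), wt e +
        ∑ e ∈ G.edgeFinset.filter (fun e => v ∈ e ∧ ¬(o e = v)), wt e = vertW G wt v := by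
      unfold vertW
      rw [← Finset.sum_filter_add_sum_filter_not (G.edgeFinset.filter (fun e => v ∈ e))
        (fun e => o e = v), Finset.filter_filter, Finset.filter_filter]
    omega
  have h6 := g.card_P v
  omega

end Aux
/-- Given a b-coloring of `H` with `k` colors, orienting each edge `e = uv`
towards the endpoint whose `x`-vertex is a b-vertex yields, for every vertex `v`, total
incoming weight `W_v / 2`; in particular this orientation is circulating. -/
theorem orientation_from_bColoring_is_circulating
    {V : Type*} [Fintype V] [DecidableEq V] (G : SimpleGraph V) [DecidableRel G.Adj]
    (wt : Sym2 V → ℕ) (hconn : G.Connected)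
    (hwt : ∀ e ∈ G.edgeFinset, 1 ≤ wt e)
    (heven : ∀ v : V, Even (vertW G wt v))
    (g : Gadget V G wt)
    (c : g.VH → Fin (numColors G wt)) (hc : IsBColoring g.H (numColors G wt) c)
    (o : Sym2 V → V)
    (ho : ∀ e ∈ G.edgeFinset, o e ∈ e ∧ IsBVertex g.H c (g.x e (o e))) :
    (∀ v : V,
      ∑ e ∈ G.edgeFinset.filter (fun e => v ∈ e ∧ o e = v), wt e = vertW G wt v / 2) ∧
    IsCirculating G wt o := by
  classical
  -- first dispose of the trivial case with no edges
  by_cases hE : G.edgeFinset = ∅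
  · constructor
    · intro v
      simp [vertW, hE]
    · exact ⟨fun e he => absurd he (by simp [hE]), fun v => by simp [hE]⟩
  · obtain ⟨e0, he0⟩ := Finset.nonempty_iff_ne_empty.mpr hE
    have hk : 7 ≤ numColors G wt := by
      have hm : 1 ≤ G.edgeFinset.card := Finset.card_pos.mpr ⟨e0, he0⟩
      have hW : G.edgeFinset.card ≤ totW G wt := by
        unfold totW
        calc G.edgeFinset.card = ∑ _e ∈ G.edgeFinset, 1 := by
              rw [Finset.sum_const, smul_eq_mul, mul_one]
          _ ≤ _ := Finset.sum_le_sum hwt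
      unfold numColors
      omega
    set Sin : V → ℕ := fun v => ∑ e ∈ G.edgeFinset.filter (fun e => v ∈ e ∧ o e = v), wt e
      with hSin
    have hcount : ∀ v : V, vertW G wt v ≤ 2 * Sin v := fun v =>
      count_at g hc hk hwt ho v
    -- the two sum identities
    have hsum1 : ∑ v : V, Sin v = totW G wt := by
      rw [hSin]
      simp only
      have : ∀ v : V, ∑ e ∈ G.edgeFinset.filter (fun e => v ∈ e ∧ o e = v), wt e =
          ∑ e ∈ G.edgeFinset, if v ∈ e ∧ o e = v then wt e else 0 := fun v =>
        Finset.sum_filter _ _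
      rw [Finset.sum_congr rfl (fun v _ => this v), Finset.sum_comm]
      unfold totW
      refine Finset.sum_congr rfl (fun e he => ?_)
      have hoee := (ho e he).1
      rw [← Finset.sum_filter]
      have hone : Finset.univ.filter (fun v => v ∈ e ∧ o e = v) = {o e} := by
        ext w
        simp only [Finset.mem_filter, Finset.mem_univ, true_and, Finset.mem_singleton]
        constructor
        · rintro ⟨_, h⟩; exact h.symm
        · rintro rfl; exact ⟨hoee, rfl⟩
      rw [hone, Finset.sum_singleton]
    have hsum2 : ∑ v : V, vertW G wt v = 2 * totW G wt := by
      unfold vertW totW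
      have : ∀ v : V, ∑ e ∈ G.edgeFinset.filter (fun e => v ∈ e), wt e =
          ∑ e ∈ G.edgeFinset, if v ∈ e then wt e else 0 := fun v => Finset.sum_filter _ _
      rw [Finset.sum_congr rfl (fun v _ => this v), Finset.sum_comm, Finset.mul_sum]
      refine Finset.sum_congr rfl (fun e he => ?_)
      have h2 : ∑ v : V, (if v ∈ e then wt e else 0) =
          (Finset.univ.filter (· ∈ e)).card * wt e := by
        rw [← Finset.sum_filter, Finset.sum_const, smul_eq_mul]
      obtain ⟨u, v, hne, rfl, hfil⟩ := ends he
      rw [h2, hfil, Finset.card_insert_of_notMem (by simp [hne]), Finset.card_singleton]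
    have heq : ∀ v : V, 2 * Sin v = vertW G wt v := by
      by_contra hne2
      push_neg at hne2
      obtain ⟨v0, hv0⟩ := hne2
      have hlt : ∑ v : V, vertW G wt v < ∑ v : V, 2 * Sin v := by
        refine Finset.sum_lt_sum (fun v _ => hcount v) ⟨v0, Finset.mem_univ v0, ?_⟩
        exact lt_of_le_of_ne (hcount v0) (fun h => hv0 h.symm)
      rw [hsum2, ← Finset.mul_sum, hsum1] at hlt
      exact lt_irrefl _ hlt
    have hmain : ∀ v : V, Sin v = vertW G wt v / 2 := fun v => by
      have := heq v
      omega
    refine ⟨hmain, fun e he => (ho e he).1, fun v => ?_⟩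
    have hsplit : Sin v + ∑ e ∈ G.edgeFinset.filter (fun e => v ∈ e ∧ ¬(o e = v)), wt e =
        vertW G wt v := by
      rw [hSin]
      simp only
      unfold vertW
      rw [← Finset.sum_filter_add_sum_filter_not (G.edgeFinset.filter (fun e => v ∈ e))
        (fun e => o e = v), Finset.filter_filter, Finset.filter_filter]
    have h1 := heq v
    have h2 : Sin v = ∑ e ∈ G.edgeFinset.filter (fun e => v ∈ e ∧ o e = v), wt e := by
      rw [hSin]
    have hgoal : ∑ e ∈ G.edgeFinset.filter (fun e => v ∈ e ∧ o e = v), wt e =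
        ∑ e ∈ G.edgeFinset.filter (fun e => v ∈ e ∧ ¬(o e = v)), wt e := by omega
    simpa using hgoal
end

section
/- If the constructed graph H admits a b-coloring with k = 2W + 3m + n + 2 colors, then (G, w) admits a circulating orientation. -/
open Finset

variable {V : Type*} [Fintype V] [DecidableEq V]

section AbstractHelpers

variable {VH : Type*} [DecidableEq VH] {k : ℕ} {H : SimpleGraph VH} {c : VH → Fin k} {a : VH}

lemma bvertex_subset_colors (hb : IsBVertex H c a) {s : Finset VH}
    (hs : ∀ b, H.Adj a b → b ∈ s) : Finset.univ.erase (c a) ⊆ s.image c := by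
  intro col hcol
  obtain ⟨b, hab, hcb⟩ := hb col (Finset.ne_of_mem_erase hcol)
  exact Finset.mem_image.2 ⟨b, hs b hab, hcb⟩

lemma not_bvertex_of_small (hk : 0 < k) {s : Finset VH} (hs : ∀ b, H.Adj a b → b ∈ s)
    (hcard : s.card + 1 < k) : ¬ IsBVertex H c a := by
  intro hb
  have h1 := Finset.card_le_card (bvertex_subset_colors hb hs)
  rw [Finset.card_erase_of_mem (Finset.mem_univ _), Finset.card_univ, Fintype.card_fin] at h1
  have h2 := Finset.card_image_le (s := s) (f := c)
  omega

lemma bvertex_rainbow (hb : IsBVertex H c a) {s : Finset VH}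
    (hsub : ∀ b, H.Adj a b → b ∈ s) (hcard : s.card + 1 = k) :
    Set.InjOn c s ∧ s.image c = Finset.univ.erase (c a) := by
  have h1 : Finset.univ.erase (c a) ⊆ s.image c := bvertex_subset_colors hb hsub
  have hcu : (Finset.univ.erase (c a)).card = k - 1 := by
    rw [Finset.card_erase_of_mem (Finset.mem_univ _), Finset.card_univ, Fintype.card_fin]
  have h2 : s.image c = Finset.univ.erase (c a) := by
    refine (Finset.eq_of_subset_of_card_le h1 ?_).symm
    have := Finset.card_image_le (s := s) (f := c)
    omega
  refine ⟨Finset.card_image_iff.1 ?_, h2⟩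
  rw [h2, hcu]; omega

end AbstractHelpers

set_option maxHeartbeats 2000000 in
/-- If the constructed graph `H` admits a b-coloring with
`k = 2W + 3m + n + 2` colors, then `(G, wt)` admits a circulating orientation. -/
theorem bColoring_gives_circulating_orientation
    {V : Type*} [Fintype V] [DecidableEq V] (G : SimpleGraph V) [DecidableRel G.Adj]
    (wt : Sym2 V → ℕ) (hconn : G.Connected)
    (hwt : ∀ e ∈ G.edgeFinset, 1 ≤ wt e)
    (heven : ∀ v : V, Even (vertW G wt v))
    (g : Gadget V G wt)
    (hbc : ∃ c : g.VH → Fin (numColors G wt), IsBColoring g.H (numColors G wt) c) :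
    ∃ o : Sym2 V → V, IsCirculating G wt o := by
  classical
  letI := g.fintypeVH; letI := g.decEqVH; letI := g.decAdj
  have hVne : Nonempty V := hconn.nonempty
  by_cases hE : G.edgeFinset = ∅
  · refine ⟨fun _ => Classical.arbitrary V, ?_, ?_⟩
    · intro e he; rw [hE] at he; exact absurd he (Finset.notMem_empty e)
    · intro v; rw [hE]; simp
  -- main case
  have hne : G.edgeFinset.Nonempty := Finset.nonempty_iff_ne_empty.2 hE
  set k := numColors G wt with hkdef
  set m := G.edgeFinset.card with hmdef
  set n := Fintype.card V with hndef
  set W := totW G wt with hWdef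
  obtain ⟨c, hprop, hsurj, hbv⟩ := hbc
  have hm1 : 1 ≤ m := Finset.card_pos.2 hne
  have hWm : m ≤ W := by
    have h1 : ∑ e ∈ G.edgeFinset, 1 ≤ ∑ e ∈ G.edgeFinset, wt e := Finset.sum_le_sum hwt
    rwa [Finset.sum_const, smul_eq_mul, mul_one] at h1
  have hn1 : 1 ≤ n := Fintype.card_pos
  have hk : k = 2 * W + 3 * m + n + 2 := rfl
  have hk0 : 0 < k := by omega
  -- extract pairwise disjointness of the parts
  have hd := g.parts_disjoint
  simp only [GadgetData.parts, List.pairwise_cons, List.mem_cons, List.mem_singleton,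
    List.not_mem_nil, or_false, forall_eq_or_imp, forall_eq, List.Pairwise.nil,
    and_true] at hd
  obtain ⟨⟨d01, d02, d03, d04, d05, d06, d07, d08, d09⟩,
    ⟨d12, d13, d14, d15, d16, d17, d18, d19⟩,
    ⟨d23, d24, d25, d26, d27, d28, d29⟩,
    ⟨d34, d35, d36, d37, d38, d39⟩,
    ⟨d45, d46, d47, d48, d49⟩,
    ⟨d56, d57, d58, d59⟩,
    ⟨d67, d68, d69⟩,
    ⟨d78, d79⟩, d89, -⟩ := hd
  -- membership helpers
  have hmO : ∀ v : V, g.orig v ∈ Finset.univ.image g.orig :=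
    fun v => Finset.mem_image_of_mem _ (Finset.mem_univ v)
  have hmX : ∀ e ∈ G.edgeFinset, ∀ u, u ∈ e → g.x e u ∈ g.Xset := by
    intro e he u hu
    exact Finset.mem_biUnion.2 ⟨e, he,
      Finset.mem_image.2 ⟨u, Finset.mem_filter.2 ⟨Finset.mem_univ u, hu⟩, rfl⟩⟩
  have hmQ : ∀ e ∈ G.edgeFinset, ∀ h : Fin 2, g.q e h ∈ g.Qset := by
    intro e he h
    refine Finset.mem_biUnion.2 ⟨e, he, ?_⟩
    fin_cases h <;> simp
  have hmP : ∀ v : V, ∀ p ∈ g.P v, p ∈ Finset.univ.biUnion g.P :=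
    fun v p hp => Finset.mem_biUnion.2 ⟨v, Finset.mem_univ v, hp⟩
  have hmY : ∀ e ∈ G.edgeFinset, ∀ y ∈ g.Y e, y ∈ G.edgeFinset.biUnion g.Y :=
    fun e he y hy => Finset.mem_biUnion.2 ⟨e, he, hy⟩
  have hmZ : ∀ e ∈ G.edgeFinset, ∀ z ∈ g.Z e, z ∈ G.edgeFinset.biUnion g.Z :=
    fun e he z hz => Finset.mem_biUnion.2 ⟨e, he, hz⟩
  have hmA : ∀ s ∈ g.Acenters, ∀ a ∈ g.Aleaves s, a ∈ g.Acenters.biUnion g.Aleaves :=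
    fun s hs a ha => Finset.mem_biUnion.2 ⟨s, hs, ha⟩
  have hmL : ∀ e ∈ G.edgeFinset, ∀ u, u ∈ e → ∀ b ∈ g.L e u, b ∈ g.Sleaves :=
    fun e he u hu b hb => g.L_subset e he u hu hb
  -- neighborhood of x_{e,u}
  have hNx : ∀ e ∈ G.edgeFinset, ∀ u, u ∈ e → ∀ b : g.VH,
      g.H.Adj (g.x e u) b ↔ b ∈ g.Y e ∪ g.Z e ∪ g.L e u ∪ {g.q e 0, g.q e 1} := by
    intro e he u hu b
    rw [g.adj_iff]
    simp only [GadgetData.AdjSpec]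
    constructor
    · rintro (spec | spec)
      · rcases spec with ⟨h1, h2⟩ | ⟨s', hs', h1, h2⟩ | ⟨v', h1, h2⟩ |
          ⟨e', he', v', hv', h1, h2⟩ | ⟨e', he', v', hv', h1, h2⟩ |
          ⟨e', he', h1, h2⟩ | ⟨e', he', hh, h1, h2⟩
        · exact absurd (h1 ▸ hmX e he u hu)
            (Finset.disjoint_left.mp d06 (Finset.mem_singleton_self _))
        · exact absurd (h1 ▸ hmX e he u hu) (Finset.disjoint_left.mp d26 hs')
        · exact absurd (h1 ▸ hmX e he u hu) (Finset.disjoint_left.mp d46 (hmO v'))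
        · exact absurd (h1 ▸ hmX e he u hu) (Finset.disjoint_left.mp d46 (hmO v'))
        · have hinj := g.x_inj e he u hu e' he' v' hv' h1
          rw [Prod.mk.injEq] at hinj
          obtain ⟨he2, hv2⟩ := hinj; subst he2; subst hv2
          simp only [Finset.mem_union]
          tauto
        · exact absurd (h1 ▸ hmX e he u hu) (Finset.disjoint_right.mp d69 (hmQ e' he' 0))
        · exact absurd (h1 ▸ hmX e he u hu) (Finset.disjoint_right.mp d69 (hmQ e' he' hh))
      · rcases spec with ⟨h1, h2⟩ | ⟨s', hs', h1, h2⟩ | ⟨v', h1, h2⟩ |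
          ⟨e', he', v', hv', h1, h2⟩ | ⟨e', he', v', hv', h1, h2⟩ |
          ⟨e', he', h1, h2⟩ | ⟨e', he', hh, h1, h2⟩
        · exact absurd h2 (Finset.disjoint_right.mp d16 (hmX e he u hu))
        · exact absurd (hmA s' hs' _ h2) (Finset.disjoint_right.mp d36 (hmX e he u hu))
        · exact absurd (hmP v' _ h2) (Finset.disjoint_right.mp d56 (hmX e he u hu))
        · rcases h2 with h2 | h2
          · exact absurd (hmL e' he' v' hv' _ h2)
              (Finset.disjoint_right.mp d16 (hmX e he u hu))
          · exact absurd (hmY e' he' _ h2) (Finset.disjoint_left.mp d67 (hmX e he u hu))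
        · rcases h2 with h2 | h2 | h2
          · exact absurd (hmY e' he' _ h2) (Finset.disjoint_left.mp d67 (hmX e he u hu))
          · exact absurd (hmZ e' he' _ h2) (Finset.disjoint_left.mp d68 (hmX e he u hu))
          · exact absurd (hmL e' he' v' hv' _ h2)
              (Finset.disjoint_right.mp d16 (hmX e he u hu))
        · exact absurd (h2 ▸ hmX e he u hu) (Finset.disjoint_right.mp d69 (hmQ e' he' 1))
        · rcases h2 with h2 | ⟨v', hv', h2⟩ | ⟨v', hv', h2⟩
          · exact absurd (hmZ e' he' _ h2) (Finset.disjoint_left.mp d68 (hmX e he u hu))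
          · exact absurd (hmL e' he' v' hv' _ h2)
              (Finset.disjoint_right.mp d16 (hmX e he u hu))
          · have hinj := g.x_inj e he u hu e' he' v' hv' h2
            rw [Prod.mk.injEq] at hinj
            obtain ⟨he2, hv2⟩ := hinj; subst he2
            subst h1
            simp only [Finset.mem_union, Finset.mem_insert, Finset.mem_singleton]
            fin_cases hh <;> simp
    · intro hb
      simp only [Finset.mem_union, Finset.mem_insert, Finset.mem_singleton] at hb
      rcases hb with ((hb | hb) | hb) | (hb | hb)
      · exact Or.inl (Or.inr (Or.inr (Or.inr (Or.inr (Or.inl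
          ⟨e, he, u, hu, rfl, Or.inl hb⟩)))))
      · exact Or.inl (Or.inr (Or.inr (Or.inr (Or.inr (Or.inl
          ⟨e, he, u, hu, rfl, Or.inr (Or.inl hb)⟩)))))
      · exact Or.inl (Or.inr (Or.inr (Or.inr (Or.inr (Or.inl
          ⟨e, he, u, hu, rfl, Or.inr (Or.inr hb)⟩)))))
      · exact Or.inr (Or.inr (Or.inr (Or.inr (Or.inr (Or.inr (Or.inr
          ⟨e, he, 0, hb ▸ rfl, Or.inr (Or.inr ⟨u, hu, rfl⟩)⟩))))))
      · exact Or.inr (Or.inr (Or.inr (Or.inr (Or.inr (Or.inr (Or.inr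
          ⟨e, he, 1, hb ▸ rfl, Or.inr (Or.inr ⟨u, hu, rfl⟩)⟩))))))
  -- neighborhood of orig v (upper bound)
  have hNo : ∀ (v : V) (b : g.VH), g.H.Adj (g.orig v) b →
      b ∈ g.P v ∪ (G.edgeFinset.filter (fun e => v ∈ e)).biUnion (fun e => g.L e v ∪ g.Y e) := by
    intro v b hadj
    rw [g.adj_iff] at hadj
    simp only [GadgetData.AdjSpec] at hadj
    have memO := hmO v
    rcases hadj with (spec | spec)
    · rcases spec with ⟨h1, h2⟩ | ⟨s', hs', h1, h2⟩ | ⟨v', h1, h2⟩ |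
        ⟨e', he', v', hv', h1, h2⟩ | ⟨e', he', v', hv', h1, h2⟩ |
        ⟨e', he', h1, h2⟩ | ⟨e', he', hh, h1, h2⟩
      · exact absurd (h1 ▸ memO) (Finset.disjoint_left.mp d04 (Finset.mem_singleton_self _))
      · exact absurd (h1.symm ▸ hs') (Finset.disjoint_right.mp d24 memO)
      · obtain rfl := g.orig_inj h1
        exact Finset.mem_union_left _ h2
      · obtain rfl := g.orig_inj h1
        refine Finset.mem_union_right _ (Finset.mem_biUnion.2
          ⟨e', Finset.mem_filter.2 ⟨he', hv'⟩, ?_⟩)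
        rcases h2 with h2 | h2
        exacts [Finset.mem_union_left _ h2, Finset.mem_union_right _ h2]
      · exact absurd (h1.symm ▸ hmX e' he' v' hv') (Finset.disjoint_left.mp d46 memO)
      · exact absurd (h1.symm ▸ hmQ e' he' 0) (Finset.disjoint_left.mp d49 memO)
      · exact absurd (h1.symm ▸ hmQ e' he' hh) (Finset.disjoint_left.mp d49 memO)
    · rcases spec with ⟨h1, h2⟩ | ⟨s', hs', h1, h2⟩ | ⟨v', h1, h2⟩ |
        ⟨e', he', v', hv', h1, h2⟩ | ⟨e', he', v', hv', h1, h2⟩ |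
        ⟨e', he', h1, h2⟩ | ⟨e', he', hh, h1, h2⟩
      · exact absurd h2 (Finset.disjoint_right.mp d14 memO)
      · exact absurd (hmA s' hs' _ h2) (Finset.disjoint_right.mp d34 memO)
      · exact absurd (hmP v' _ h2) (Finset.disjoint_left.mp d45 memO)
      · rcases h2 with h2 | h2
        · exact absurd (hmL e' he' v' hv' _ h2) (Finset.disjoint_right.mp d14 memO)
        · exact absurd (hmY e' he' _ h2) (Finset.disjoint_left.mp d47 memO)
      · rcases h2 with h2 | h2 | h2
        · exact absurd (hmY e' he' _ h2) (Finset.disjoint_left.mp d47 memO)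
        · exact absurd (hmZ e' he' _ h2) (Finset.disjoint_left.mp d48 memO)
        · exact absurd (hmL e' he' v' hv' _ h2) (Finset.disjoint_right.mp d14 memO)
      · exact absurd (h2.symm ▸ hmQ e' he' 1) (Finset.disjoint_left.mp d49 memO)
      · rcases h2 with h2 | ⟨v', hv', h2⟩ | ⟨v', hv', h2⟩
        · exact absurd (hmZ e' he' _ h2) (Finset.disjoint_left.mp d48 memO)
        · exact absurd (hmL e' he' v' hv' _ h2) (Finset.disjoint_right.mp d14 memO)
        · exact absurd (h2.symm ▸ hmX e' he' v' hv') (Finset.disjoint_left.mp d46 memO)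
  -- neighborhood of q (upper bound)
  have hNq : ∀ e ∈ G.edgeFinset, ∀ u v : V, u ∈ e → v ∈ e → (∀ w, w ∈ e → w = u ∨ w = v) →
      ∀ (h : Fin 2) (b : g.VH), g.H.Adj (g.q e h) b →
      b ∈ g.Z e ∪ g.L e u ∪ g.L e v ∪ {g.x e u, g.x e v, g.q e 0, g.q e 1} := by
    intro e he u v hu hv hcomp h b hadj
    rw [g.adj_iff] at hadj
    simp only [GadgetData.AdjSpec] at hadj
    have memQ := hmQ e he h
    rcases hadj with (spec | spec)
    · rcases spec with ⟨h1, h2⟩ | ⟨s', hs', h1, h2⟩ | ⟨v', h1, h2⟩ |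
        ⟨e', he', v', hv', h1, h2⟩ | ⟨e', he', v', hv', h1, h2⟩ |
        ⟨e', he', h1, h2⟩ | ⟨e', he', hh, h1, h2⟩
      · exact absurd (h1 ▸ memQ) (Finset.disjoint_left.mp d09 (Finset.mem_singleton_self _))
      · exact absurd (h1.symm ▸ hs') (Finset.disjoint_right.mp d29 memQ)
      · exact absurd (h1.symm ▸ hmO v') (Finset.disjoint_right.mp d49 memQ)
      · exact absurd (h1.symm ▸ hmO v') (Finset.disjoint_right.mp d49 memQ)
      · exact absurd (h1.symm ▸ hmX e' he' v' hv') (Finset.disjoint_right.mp d69 memQ)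
      · have hinj := g.q_inj e he h e' he' 0 h1
        rw [Prod.mk.injEq] at hinj
        obtain ⟨he2, -⟩ := hinj; subst he2
        subst h2
        simp
      · have hinj := g.q_inj e he h e' he' hh h1
        rw [Prod.mk.injEq] at hinj
        obtain ⟨he2, -⟩ := hinj; subst he2
        rcases h2 with h2 | ⟨v'', hv'', h2⟩ | ⟨v'', hv'', h2⟩
        · exact Finset.mem_union_left _ (Finset.mem_union_left _ (Finset.mem_union_left _ h2))
        · rcases hcomp v'' hv'' with rfl | rfl
          · exact Finset.mem_union_left _ (Finset.mem_union_left _ (Finset.mem_union_right _ h2))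
          · exact Finset.mem_union_left _ (Finset.mem_union_right _ h2)
        · subst h2
          rcases hcomp v'' hv'' with rfl | rfl <;> simp
    · rcases spec with ⟨h1, h2⟩ | ⟨s', hs', h1, h2⟩ | ⟨v', h1, h2⟩ |
        ⟨e', he', v', hv', h1, h2⟩ | ⟨e', he', v', hv', h1, h2⟩ |
        ⟨e', he', h1, h2⟩ | ⟨e', he', hh, h1, h2⟩
      · exact absurd h2 (Finset.disjoint_right.mp d19 memQ)
      · exact absurd (hmA s' hs' _ h2) (Finset.disjoint_right.mp d39 memQ)
      · exact absurd (hmP v' _ h2) (Finset.disjoint_right.mp d59 memQ)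
      · rcases h2 with h2 | h2
        · exact absurd (hmL e' he' v' hv' _ h2) (Finset.disjoint_right.mp d19 memQ)
        · exact absurd (hmY e' he' _ h2) (Finset.disjoint_right.mp d79 memQ)
      · rcases h2 with h2 | h2 | h2
        · exact absurd (hmY e' he' _ h2) (Finset.disjoint_right.mp d79 memQ)
        · exact absurd (hmZ e' he' _ h2) (Finset.disjoint_right.mp d89 memQ)
        · exact absurd (hmL e' he' v' hv' _ h2) (Finset.disjoint_right.mp d19 memQ)
      · have hinj := g.q_inj e he h e' he' 1 h2
        rw [Prod.mk.injEq] at hinj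
        obtain ⟨he2, -⟩ := hinj; subst he2
        subst h1
        simp
      · rcases h2 with h2 | ⟨v'', hv'', h2⟩ | ⟨v'', hv'', h2⟩
        · exact absurd (hmZ e' he' _ h2) (Finset.disjoint_right.mp d89 memQ)
        · exact absurd (hmL e' he' v'' hv'' _ h2) (Finset.disjoint_right.mp d19 memQ)
        · exact absurd (h2.symm ▸ hmX e' he' v'' hv'') (Finset.disjoint_right.mp d69 memQ)
  -- neighborhoods of the small parts (upper bounds)
  have hNs : ∀ b' ∈ g.Sleaves, ∀ b : g.VH, g.H.Adj b' b →
      b ∈ {g.sstar} ∪ Finset.univ.image g.orig ∪ g.Xset ∪ g.Qset := by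
    intro b' hb' b hadj
    rw [g.adj_iff] at hadj
    simp only [GadgetData.AdjSpec] at hadj
    rcases hadj with (spec | spec)
    · rcases spec with ⟨h1, h2⟩ | ⟨s', hs', h1, h2⟩ | ⟨v', h1, h2⟩ |
        ⟨e', he', v', hv', h1, h2⟩ | ⟨e', he', v', hv', h1, h2⟩ |
        ⟨e', he', h1, h2⟩ | ⟨e', he', hh, h1, h2⟩
      · exact absurd (h1 ▸ hb') (Finset.disjoint_left.mp d01 (Finset.mem_singleton_self _))
      · exact absurd (h1.symm ▸ hs') (Finset.disjoint_left.mp d12 hb')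
      · exact absurd (h1.symm ▸ hmO v') (Finset.disjoint_left.mp d14 hb')
      · exact absurd (h1.symm ▸ hmO v') (Finset.disjoint_left.mp d14 hb')
      · exact absurd (h1.symm ▸ hmX e' he' v' hv') (Finset.disjoint_left.mp d16 hb')
      · exact absurd (h1.symm ▸ hmQ e' he' 0) (Finset.disjoint_left.mp d19 hb')
      · exact absurd (h1.symm ▸ hmQ e' he' hh) (Finset.disjoint_left.mp d19 hb')
    · rcases spec with ⟨h1, h2⟩ | ⟨s', hs', h1, h2⟩ | ⟨v', h1, h2⟩ |
        ⟨e', he', v', hv', h1, h2⟩ | ⟨e', he', v', hv', h1, h2⟩ |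
        ⟨e', he', h1, h2⟩ | ⟨e', he', hh, h1, h2⟩
      · subst h1
        exact Finset.mem_union_left _ (Finset.mem_union_left _ (Finset.mem_union_left _
          (Finset.mem_singleton_self _)))
      · exact absurd (hmA s' hs' _ h2) (Finset.disjoint_left.mp d13 hb')
      · exact absurd (hmP v' _ h2) (Finset.disjoint_left.mp d15 hb')
      · subst h1
        exact Finset.mem_union_left _ (Finset.mem_union_left _
          (Finset.mem_union_right _ (hmO v')))
      · subst h1
        exact Finset.mem_union_left _ (Finset.mem_union_right _ (hmX e' he' v' hv'))
      · exact absurd (h2.symm ▸ hmQ e' he' 1) (Finset.disjoint_left.mp d19 hb')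
      · subst h1
        exact Finset.mem_union_right _ (hmQ e' he' hh)
  have hNal : ∀ s ∈ g.Acenters, ∀ b' ∈ g.Aleaves s, ∀ b : g.VH, g.H.Adj b' b →
      b ∈ g.Acenters := by
    intro s hs b' hb' b hadj
    have mem3 := hmA s hs _ hb'
    rw [g.adj_iff] at hadj
    simp only [GadgetData.AdjSpec] at hadj
    rcases hadj with (spec | spec)
    · rcases spec with ⟨h1, h2⟩ | ⟨s', hs', h1, h2⟩ | ⟨v', h1, h2⟩ |
        ⟨e', he', v', hv', h1, h2⟩ | ⟨e', he', v', hv', h1, h2⟩ |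
        ⟨e', he', h1, h2⟩ | ⟨e', he', hh, h1, h2⟩
      · exact absurd (h1 ▸ mem3) (Finset.disjoint_left.mp d03 (Finset.mem_singleton_self _))
      · exact absurd (h1.symm ▸ hs') (Finset.disjoint_right.mp d23 mem3)
      · exact absurd (h1.symm ▸ hmO v') (Finset.disjoint_left.mp d34 mem3)
      · exact absurd (h1.symm ▸ hmO v') (Finset.disjoint_left.mp d34 mem3)
      · exact absurd (h1.symm ▸ hmX e' he' v' hv') (Finset.disjoint_left.mp d36 mem3)
      · exact absurd (h1.symm ▸ hmQ e' he' 0) (Finset.disjoint_left.mp d39 mem3)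
      · exact absurd (h1.symm ▸ hmQ e' he' hh) (Finset.disjoint_left.mp d39 mem3)
    · rcases spec with ⟨h1, h2⟩ | ⟨s', hs', h1, h2⟩ | ⟨v', h1, h2⟩ |
        ⟨e', he', v', hv', h1, h2⟩ | ⟨e', he', v', hv', h1, h2⟩ |
        ⟨e', he', h1, h2⟩ | ⟨e', he', hh, h1, h2⟩
      · exact absurd h2 (Finset.disjoint_right.mp d13 mem3)
      · subst h1; exact hs'
      · exact absurd (hmP v' _ h2) (Finset.disjoint_left.mp d35 mem3)
      · rcases h2 with h2 | h2
        · exact absurd (hmL e' he' v' hv' _ h2) (Finset.disjoint_right.mp d13 mem3)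
        · exact absurd (hmY e' he' _ h2) (Finset.disjoint_left.mp d37 mem3)
      · rcases h2 with h2 | h2 | h2
        · exact absurd (hmY e' he' _ h2) (Finset.disjoint_left.mp d37 mem3)
        · exact absurd (hmZ e' he' _ h2) (Finset.disjoint_left.mp d38 mem3)
        · exact absurd (hmL e' he' v' hv' _ h2) (Finset.disjoint_right.mp d13 mem3)
      · exact absurd (h2.symm ▸ hmQ e' he' 1) (Finset.disjoint_left.mp d39 mem3)
      · rcases h2 with h2 | ⟨v'', hv'', h2⟩ | ⟨v'', hv'', h2⟩
        · exact absurd (hmZ e' he' _ h2) (Finset.disjoint_left.mp d38 mem3)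
        · exact absurd (hmL e' he' v'' hv'' _ h2) (Finset.disjoint_right.mp d13 mem3)
        · exact absurd (h2.symm ▸ hmX e' he' v'' hv'') (Finset.disjoint_left.mp d36 mem3)
  have hNp : ∀ v : V, ∀ b' ∈ g.P v, ∀ b : g.VH, g.H.Adj b' b →
      b ∈ Finset.univ.image g.orig := by
    intro v b' hb' b hadj
    have mem5 := hmP v _ hb'
    rw [g.adj_iff] at hadj
    simp only [GadgetData.AdjSpec] at hadj
    rcases hadj with (spec | spec)
    · rcases spec with ⟨h1, h2⟩ | ⟨s', hs', h1, h2⟩ | ⟨v', h1, h2⟩ |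
        ⟨e', he', v', hv', h1, h2⟩ | ⟨e', he', v', hv', h1, h2⟩ |
        ⟨e', he', h1, h2⟩ | ⟨e', he', hh, h1, h2⟩
      · exact absurd (h1 ▸ mem5) (Finset.disjoint_left.mp d05 (Finset.mem_singleton_self _))
      · exact absurd (h1.symm ▸ hs') (Finset.disjoint_right.mp d25 mem5)
      · exact absurd (h1.symm ▸ hmO v') (Finset.disjoint_right.mp d45 mem5)
      · exact absurd (h1.symm ▸ hmO v') (Finset.disjoint_right.mp d45 mem5)
      · exact absurd (h1.symm ▸ hmX e' he' v' hv') (Finset.disjoint_left.mp d56 mem5)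
      · exact absurd (h1.symm ▸ hmQ e' he' 0) (Finset.disjoint_left.mp d59 mem5)
      · exact absurd (h1.symm ▸ hmQ e' he' hh) (Finset.disjoint_left.mp d59 mem5)
    · rcases spec with ⟨h1, h2⟩ | ⟨s', hs', h1, h2⟩ | ⟨v', h1, h2⟩ |
        ⟨e', he', v', hv', h1, h2⟩ | ⟨e', he', v', hv', h1, h2⟩ |
        ⟨e', he', h1, h2⟩ | ⟨e', he', hh, h1, h2⟩
      · exact absurd h2 (Finset.disjoint_right.mp d15 mem5)
      · exact absurd (hmA s' hs' _ h2) (Finset.disjoint_right.mp d35 mem5)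
      · subst h1; exact hmO v'
      · subst h1; exact hmO v'
      · rcases h2 with h2 | h2 | h2
        · exact absurd (hmY e' he' _ h2) (Finset.disjoint_left.mp d57 mem5)
        · exact absurd (hmZ e' he' _ h2) (Finset.disjoint_left.mp d58 mem5)
        · exact absurd (hmL e' he' v' hv' _ h2) (Finset.disjoint_right.mp d15 mem5)
      · exact absurd (h2.symm ▸ hmQ e' he' 1) (Finset.disjoint_left.mp d59 mem5)
      · rcases h2 with h2 | ⟨v'', hv'', h2⟩ | ⟨v'', hv'', h2⟩
        · exact absurd (hmZ e' he' _ h2) (Finset.disjoint_left.mp d58 mem5)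
        · exact absurd (hmL e' he' v'' hv'' _ h2) (Finset.disjoint_right.mp d15 mem5)
        · exact absurd (h2.symm ▸ hmX e' he' v'' hv'') (Finset.disjoint_left.mp d56 mem5)
  have hNy : ∀ e ∈ G.edgeFinset, ∀ b' ∈ g.Y e, ∀ b : g.VH, g.H.Adj b' b →
      b ∈ Finset.univ.image g.orig ∪ g.Xset := by
    intro e he b' hb' b hadj
    have mem7 := hmY e he _ hb'
    rw [g.adj_iff] at hadj
    simp only [GadgetData.AdjSpec] at hadj
    rcases hadj with (spec | spec)
    · rcases spec with ⟨h1, h2⟩ | ⟨s', hs', h1, h2⟩ | ⟨v', h1, h2⟩ |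
        ⟨e', he', v', hv', h1, h2⟩ | ⟨e', he', v', hv', h1, h2⟩ |
        ⟨e', he', h1, h2⟩ | ⟨e', he', hh, h1, h2⟩
      · exact absurd (h1 ▸ mem7) (Finset.disjoint_left.mp d07 (Finset.mem_singleton_self _))
      · exact absurd (h1.symm ▸ hs') (Finset.disjoint_right.mp d27 mem7)
      · exact absurd (h1.symm ▸ hmO v') (Finset.disjoint_right.mp d47 mem7)
      · exact absurd (h1.symm ▸ hmO v') (Finset.disjoint_right.mp d47 mem7)
      · exact absurd (h1.symm ▸ hmX e' he' v' hv') (Finset.disjoint_right.mp d67 mem7)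
      · exact absurd (h1.symm ▸ hmQ e' he' 0) (Finset.disjoint_left.mp d79 mem7)
      · exact absurd (h1.symm ▸ hmQ e' he' hh) (Finset.disjoint_left.mp d79 mem7)
    · rcases spec with ⟨h1, h2⟩ | ⟨s', hs', h1, h2⟩ | ⟨v', h1, h2⟩ |
        ⟨e', he', v', hv', h1, h2⟩ | ⟨e', he', v', hv', h1, h2⟩ |
        ⟨e', he', h1, h2⟩ | ⟨e', he', hh, h1, h2⟩
      · exact absurd h2 (Finset.disjoint_right.mp d17 mem7)
      · exact absurd (hmA s' hs' _ h2) (Finset.disjoint_right.mp d37 mem7)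
      · exact absurd (hmP v' _ h2) (Finset.disjoint_right.mp d57 mem7)
      · subst h1; exact Finset.mem_union_left _ (hmO v')
      · subst h1; exact Finset.mem_union_right _ (hmX e' he' v' hv')
      · exact absurd (h2.symm ▸ hmQ e' he' 1) (Finset.disjoint_left.mp d79 mem7)
      · rcases h2 with h2 | ⟨v'', hv'', h2⟩ | ⟨v'', hv'', h2⟩
        · exact absurd (hmZ e' he' _ h2) (Finset.disjoint_left.mp d78 mem7)
        · exact absurd (hmL e' he' v'' hv'' _ h2) (Finset.disjoint_right.mp d17 mem7)
        · exact absurd (h2.symm ▸ hmX e' he' v'' hv'') (Finset.disjoint_right.mp d67 mem7)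
  have hNz : ∀ e ∈ G.edgeFinset, ∀ b' ∈ g.Z e, ∀ b : g.VH, g.H.Adj b' b →
      b ∈ g.Xset ∪ g.Qset := by
    intro e he b' hb' b hadj
    have mem8 := hmZ e he _ hb'
    rw [g.adj_iff] at hadj
    simp only [GadgetData.AdjSpec] at hadj
    rcases hadj with (spec | spec)
    · rcases spec with ⟨h1, h2⟩ | ⟨s', hs', h1, h2⟩ | ⟨v', h1, h2⟩ |
        ⟨e', he', v', hv', h1, h2⟩ | ⟨e', he', v', hv', h1, h2⟩ |
        ⟨e', he', h1, h2⟩ | ⟨e', he', hh, h1, h2⟩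
      · exact absurd (h1 ▸ mem8) (Finset.disjoint_left.mp d08 (Finset.mem_singleton_self _))
      · exact absurd (h1.symm ▸ hs') (Finset.disjoint_right.mp d28 mem8)
      · exact absurd (h1.symm ▸ hmO v') (Finset.disjoint_right.mp d48 mem8)
      · exact absurd (h1.symm ▸ hmO v') (Finset.disjoint_right.mp d48 mem8)
      · exact absurd (h1.symm ▸ hmX e' he' v' hv') (Finset.disjoint_right.mp d68 mem8)
      · exact absurd (h1.symm ▸ hmQ e' he' 0) (Finset.disjoint_left.mp d89 mem8)
      · exact absurd (h1.symm ▸ hmQ e' he' hh) (Finset.disjoint_left.mp d89 mem8)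
    · rcases spec with ⟨h1, h2⟩ | ⟨s', hs', h1, h2⟩ | ⟨v', h1, h2⟩ |
        ⟨e', he', v', hv', h1, h2⟩ | ⟨e', he', v', hv', h1, h2⟩ |
        ⟨e', he', h1, h2⟩ | ⟨e', he', hh, h1, h2⟩
      · exact absurd h2 (Finset.disjoint_right.mp d18 mem8)
      · exact absurd (hmA s' hs' _ h2) (Finset.disjoint_right.mp d38 mem8)
      · exact absurd (hmP v' _ h2) (Finset.disjoint_right.mp d58 mem8)
      · rcases h2 with h2 | h2
        · exact absurd (hmL e' he' v' hv' _ h2) (Finset.disjoint_right.mp d18 mem8)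
        · exact absurd (hmY e' he' _ h2) (Finset.disjoint_right.mp d78 mem8)
      · subst h1; exact Finset.mem_union_left _ (hmX e' he' v' hv')
      · exact absurd (h2.symm ▸ hmQ e' he' 1) (Finset.disjoint_left.mp d89 mem8)
      · subst h1; exact Finset.mem_union_right _ (hmQ e' he' hh)
  -- edges have two distinct endpoints
  have hend : ∀ e ∈ G.edgeFinset, ∃ a b : V, a ≠ b ∧ e = s(a, b) := by
    intro e he
    induction e using Sym2.ind with
    | _ a b =>
      have hadj : G.Adj a b := G.mem_edgeSet.mp (SimpleGraph.mem_edgeFinset.mp he)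
      exact ⟨a, b, hadj.ne, rfl⟩
  have hfil : ∀ a b : V, (Finset.univ.filter (fun z => z ∈ s(a, b))) = {a, b} := by
    intro a b
    ext z
    simp [Sym2.mem_iff]
  have hfil2 : ∀ e ∈ G.edgeFinset, (Finset.univ.filter (fun z => z ∈ e)).card = 2 := by
    intro e he
    obtain ⟨a, b, hab, rfl⟩ := hend e he
    rw [hfil a b, Finset.card_insert_of_notMem (by simp [hab]), Finset.card_singleton]
  have hXcard : g.Xset.card ≤ 2 * m := by
    refine (Finset.card_biUnion_le).trans ?_
    calc ∑ e ∈ G.edgeFinset, ((Finset.univ.filter (fun v => v ∈ e)).image (g.x e)).card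
        ≤ ∑ e ∈ G.edgeFinset, 2 := by
          refine Finset.sum_le_sum fun e he => ?_
          exact (Finset.card_image_le).trans (le_of_eq (hfil2 e he))
      _ = 2 * m := by rw [Finset.sum_const, smul_eq_mul, mul_comm]
  have hQcard : g.Qset.card ≤ 2 * m := by
    refine (Finset.card_biUnion_le).trans ?_
    calc ∑ e ∈ G.edgeFinset, ({g.q e 0, g.q e 1} : Finset g.VH).card
        ≤ ∑ e ∈ G.edgeFinset, 2 := by
          refine Finset.sum_le_sum fun e he => ?_
          exact (Finset.card_insert_le _ _).trans (by simp)
      _ = 2 * m := by rw [Finset.sum_const, smul_eq_mul, mul_comm]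
  have hOcard : (Finset.univ.image g.orig).card = n := by
    rw [Finset.card_image_of_injective _ g.orig_inj, Finset.card_univ]
  -- small parts contain no b-vertices
  have hnbS : ∀ b' ∈ g.Sleaves, ¬ IsBVertex g.H c b' := by
    intro b' hb'
    refine not_bvertex_of_small hk0 (hNs b' hb') ?_
    have h1 := Finset.card_union_le ({g.sstar} ∪ Finset.univ.image g.orig ∪ g.Xset) g.Qset
    have h2 := Finset.card_union_le ({g.sstar} ∪ Finset.univ.image g.orig) g.Xset
    have h3 := Finset.card_union_le ({g.sstar} : Finset g.VH) (Finset.univ.image g.orig)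
    have h4 : ({g.sstar} : Finset g.VH).card = 1 := Finset.card_singleton _
    omega
  have hnbA : ∀ s ∈ g.Acenters, ∀ b' ∈ g.Aleaves s, ¬ IsBVertex g.H c b' := by
    intro s hs b' hb'
    refine not_bvertex_of_small hk0 (hNal s hs b' hb') ?_
    have h1 := g.card_Acenters
    omega
  have hnbP : ∀ v : V, ∀ b' ∈ g.P v, ¬ IsBVertex g.H c b' := by
    intro v b' hb'
    refine not_bvertex_of_small hk0 (hNp v b' hb') ?_
    omega
  have hnbY : ∀ e ∈ G.edgeFinset, ∀ b' ∈ g.Y e, ¬ IsBVertex g.H c b' := by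
    intro e he b' hb'
    refine not_bvertex_of_small hk0 (hNy e he b' hb') ?_
    have h1 := Finset.card_union_le (Finset.univ.image g.orig) g.Xset
    omega
  have hnbZ : ∀ e ∈ G.edgeFinset, ∀ b' ∈ g.Z e, ¬ IsBVertex g.H c b' := by
    intro e he b' hb'
    refine not_bvertex_of_small hk0 (hNz e he b' hb') ?_
    have h1 := Finset.card_union_le g.Xset g.Qset
    omega
  -- every b-vertex lies in the big set
  have hbigBV : ∀ a : g.VH, IsBVertex g.H c a →
      a ∈ {g.sstar} ∪ g.Acenters ∪ Finset.univ.image g.orig ∪ g.Xset ∪ g.Qset := by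
    intro a hab
    obtain ⟨p, hp, hap⟩ := g.parts_cover a
    simp only [GadgetData.parts, List.mem_cons, List.not_mem_nil, or_false] at hp
    rcases hp with rfl | rfl | rfl | rfl | rfl | rfl | rfl | rfl | rfl | rfl
    · exact Finset.mem_union_left _ (Finset.mem_union_left _ (Finset.mem_union_left _
        (Finset.mem_union_left _ hap)))
    · exact absurd hab (hnbS a hap)
    · exact Finset.mem_union_left _ (Finset.mem_union_left _ (Finset.mem_union_left _
        (Finset.mem_union_right _ hap)))
    · obtain ⟨s, hs, ha⟩ := Finset.mem_biUnion.1 hap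
      exact absurd hab (hnbA s hs a ha)
    · exact Finset.mem_union_left _ (Finset.mem_union_left _ (Finset.mem_union_right _ hap))
    · obtain ⟨v, -, ha⟩ := Finset.mem_biUnion.1 hap
      exact absurd hab (hnbP v a ha)
    · exact Finset.mem_union_left _ (Finset.mem_union_right _ hap)
    · obtain ⟨e, he, ha⟩ := Finset.mem_biUnion.1 hap
      exact absurd hab (hnbY e he a ha)
    · obtain ⟨e, he, ha⟩ := Finset.mem_biUnion.1 hap
      exact absurd hab (hnbZ e he a ha)
    · exact Finset.mem_union_right _ hap
  -- rainbow neighborhoods at the x-vertices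
  have hq01 : ∀ e ∈ G.edgeFinset, g.q e 0 ≠ g.q e 1 := by
    intro e he hq
    have h1 := g.q_inj e he 0 e he 1 hq
    rw [Prod.mk.injEq] at h1
    exact absurd h1.2 (by decide)
  have hqsubQ : ∀ e ∈ G.edgeFinset, ({g.q e 0, g.q e 1} : Finset g.VH) ⊆ g.Qset := by
    intro e he z hz
    rcases Finset.mem_insert.1 hz with rfl | hz
    · exact hmQ e he 0
    · rw [Finset.mem_singleton] at hz; subst hz; exact hmQ e he 1
  have hxRainbow : ∀ e ∈ G.edgeFinset, ∀ u, u ∈ e → IsBVertex g.H c (g.x e u) →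
      Set.InjOn c ↑(g.Y e ∪ g.Z e ∪ g.L e u ∪ {g.q e 0, g.q e 1}) ∧
      (g.Y e ∪ g.Z e ∪ g.L e u ∪ {g.q e 0, g.q e 1}).image c
        = Finset.univ.erase (c (g.x e u)) := by
    intro e he u hu hb
    have hYsub : g.Y e ⊆ G.edgeFinset.biUnion g.Y := fun y hy => hmY e he y hy
    have hZsub : g.Z e ⊆ G.edgeFinset.biUnion g.Z := fun z hz => hmZ e he z hz
    have hLsub : g.L e u ⊆ g.Sleaves := fun l hl => hmL e he u hu l hl
    have dYZ : Disjoint (g.Y e) (g.Z e) := d78.mono hYsub hZsub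
    have dYL : Disjoint (g.Y e) (g.L e u) := d17.symm.mono hYsub hLsub
    have dZL : Disjoint (g.Z e) (g.L e u) := d18.symm.mono hZsub hLsub
    have dYq : Disjoint (g.Y e) ({g.q e 0, g.q e 1} : Finset g.VH) :=
      d79.mono hYsub (hqsubQ e he)
    have dZq : Disjoint (g.Z e) ({g.q e 0, g.q e 1} : Finset g.VH) :=
      d89.mono hZsub (hqsubQ e he)
    have dLq : Disjoint (g.L e u) ({g.q e 0, g.q e 1} : Finset g.VH) :=
      d19.mono hLsub (hqsubQ e he)
    refine bvertex_rainbow hb (fun b hb2 => (hNx e he u hu b).1 hb2) ?_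
    rw [Finset.card_union_of_disjoint (by
        refine Finset.disjoint_union_left.2 ⟨Finset.disjoint_union_left.2 ⟨dYq, dZq⟩, dLq⟩),
      Finset.card_union_of_disjoint (by
        refine Finset.disjoint_union_left.2 ⟨dYL, dZL⟩),
      Finset.card_union_of_disjoint dYZ]
    have hc2 : ({g.q e 0, g.q e 1} : Finset g.VH).card = 2 := by
      rw [Finset.card_insert_of_notMem (by simp [hq01 e he]), Finset.card_singleton]
    have hZc := g.card_Z e he
    have hYc := g.card_Y e he
    have hLc := g.card_L e he u hu
    omega
  -- Claim A: if both x-vertices of an edge are b-vertices, the q-vertices are not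
  have hClaimA : ∀ e ∈ G.edgeFinset, ∀ u v : V, u ∈ e → v ∈ e →
      (∀ w, w ∈ e → w = u ∨ w = v) →
      IsBVertex g.H c (g.x e u) → IsBVertex g.H c (g.x e v) →
      ∀ h : Fin 2, ¬ IsBVertex g.H c (g.q e h) := by
    intro e he u v hu hv hcomp hbu hbv h hbq
    obtain ⟨injU, imgU⟩ := hxRainbow e he u hu hbu
    obtain ⟨injV, imgV⟩ := hxRainbow e he v hv hbv
    have hTsub : (g.L e v).image c ∪ {c (g.x e v)} ⊆ (g.L e u).image c ∪ {c (g.x e u)} := by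
      intro t ht
      by_cases htu : t = c (g.x e u)
      · exact Finset.mem_union_right _ (by simp [htu])
      · have ht1 : t ∈ (g.Y e ∪ g.Z e ∪ g.L e u ∪ {g.q e 0, g.q e 1}).image c := by
          rw [imgU]; exact Finset.mem_erase.2 ⟨htu, Finset.mem_univ _⟩
        obtain ⟨b0, hb0, hb0c⟩ := Finset.mem_image.1 ht1
        have hbad : ∀ b0' : g.VH, b0' ∈ g.Y e ∪ g.Z e ∪ g.L e v ∪ {g.q e 0, g.q e 1} →
            b0' ∉ g.Sleaves → c b0' = t → False := by
          intro b0' hb0N hb0S hb0c'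
          rcases Finset.mem_union.1 ht with htl | hts
          · obtain ⟨l, hl, hlc⟩ := Finset.mem_image.1 htl
            have heq : b0' = l := injV hb0N
              (Finset.mem_union_left _ (Finset.mem_union_right _ hl))
              (by rw [hb0c', ← hlc])
            exact hb0S (heq ▸ hmL e he v hv l hl)
          · rw [Finset.mem_singleton] at hts
            have hadj : g.H.Adj (g.x e v) b0' := (hNx e he v hv b0').2 hb0N
            exact hprop hadj (hb0c'.trans hts).symm
        simp only [Finset.mem_union, Finset.mem_insert, Finset.mem_singleton] at hb0
        rcases hb0 with ((hb0 | hb0) | hb0) | (hb0 | hb0)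
        · exact absurd hb0c (fun hc => hbad b0
            (Finset.mem_union_left _ (Finset.mem_union_left _ (Finset.mem_union_left _ hb0)))
            (Finset.disjoint_right.mp d17 (hmY e he _ hb0)) hc)
        · exact absurd hb0c (fun hc => hbad b0
            (Finset.mem_union_left _ (Finset.mem_union_left _ (Finset.mem_union_right _ hb0)))
            (Finset.disjoint_right.mp d18 (hmZ e he _ hb0)) hc)
        · exact Finset.mem_union_left _ (Finset.mem_image.2 ⟨b0, hb0, hb0c⟩)
        · subst hb0
          exact absurd hb0c (fun hc => hbad (g.q e 0)
            (Finset.mem_union_right _ (by simp))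
            (Finset.disjoint_right.mp d19 (hmQ e he 0)) hc)
        · subst hb0
          exact absurd hb0c (fun hc => hbad (g.q e 1)
            (Finset.mem_union_right _ (by simp))
            (Finset.disjoint_right.mp d19 (hmQ e he 1)) hc)
    -- now count the colors around q e h
    have hqmem : g.q e h ∈ g.Z e ∪ g.L e u ∪ g.L e v
        ∪ ({g.x e u, g.x e v, g.q e 0, g.q e 1} : Finset g.VH) := by
      refine Finset.mem_union_right _ ?_
      fin_cases h <;> simp
    have huniv : (Finset.univ : Finset (Fin k)) ⊆
        (g.Z e ∪ g.L e u ∪ g.L e v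
          ∪ ({g.x e u, g.x e v, g.q e 0, g.q e 1} : Finset g.VH)).image c := by
      intro col _
      by_cases hc : col = c (g.q e h)
      · subst hc; exact Finset.mem_image_of_mem c hqmem
      · obtain ⟨b0, hadj, rfl⟩ := hbq col hc
        exact Finset.mem_image_of_mem c (hNq e he u v hu hv hcomp h b0 hadj)
    have hk2 : k ≤ ((g.Z e ∪ g.L e u ∪ g.L e v
        ∪ ({g.x e u, g.x e v, g.q e 0, g.q e 1} : Finset g.VH)).image c).card := by
      have h1 := Finset.card_le_card huniv
      rwa [Finset.card_univ, Fintype.card_fin] at h1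
    have hsub2 : (g.Z e ∪ g.L e u ∪ g.L e v
        ∪ ({g.x e u, g.x e v, g.q e 0, g.q e 1} : Finset g.VH)).image c ⊆
        (g.Z e).image c ∪ ((g.L e u).image c ∪ {c (g.x e u)})
          ∪ ({c (g.q e 0), c (g.q e 1)} : Finset (Fin k)) := by
      intro t ht
      obtain ⟨b0, hb0, rfl⟩ := Finset.mem_image.1 ht
      rcases Finset.mem_union.1 hb0 with hb1 | hb4
      · rcases Finset.mem_union.1 hb1 with hb2 | hbLv
        · rcases Finset.mem_union.1 hb2 with hbZ | hbLu
          · exact Finset.mem_union_left _ (Finset.mem_union_left _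
              (Finset.mem_image_of_mem c hbZ))
          · exact Finset.mem_union_left _ (Finset.mem_union_right _
              (Finset.mem_union_left _ (Finset.mem_image_of_mem c hbLu)))
        · exact Finset.mem_union_left _ (Finset.mem_union_right _
            (hTsub (Finset.mem_union_left _ (Finset.mem_image_of_mem c hbLv))))
      · rcases Finset.mem_insert.1 hb4 with rfl | hb5
        · exact Finset.mem_union_left _ (Finset.mem_union_right _
            (Finset.mem_union_right _ (Finset.mem_singleton_self _)))
        rcases Finset.mem_insert.1 hb5 with rfl | hb6
        · exact Finset.mem_union_left _ (Finset.mem_union_right _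
            (hTsub (Finset.mem_union_right _ (Finset.mem_singleton_self _))))
        rcases Finset.mem_insert.1 hb6 with rfl | hb7
        · exact Finset.mem_union_right _ (Finset.mem_insert_self _ _)
        · rw [Finset.mem_singleton] at hb7; subst hb7
          exact Finset.mem_union_right _ (Finset.mem_insert_of_mem (Finset.mem_singleton_self _))
    have h1 := hk2.trans (Finset.card_le_card hsub2)
    have h2 := Finset.card_union_le ((g.Z e).image c ∪ ((g.L e u).image c ∪ {c (g.x e u)}))
      ({c (g.q e 0), c (g.q e 1)} : Finset (Fin k))
    have h3 := Finset.card_union_le ((g.Z e).image c) ((g.L e u).image c ∪ {c (g.x e u)})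
    have h4 := Finset.card_union_le ((g.L e u).image c) ({c (g.x e u)} : Finset (Fin k))
    have h5 : ((g.Z e).image c).card ≤ (g.Z e).card := Finset.card_image_le
    have h6 : ((g.L e u).image c).card ≤ wt e :=
      Finset.card_image_le.trans (le_of_eq (g.card_L e he u hu))
    have h7 : ({c (g.x e u)} : Finset (Fin k)).card = 1 := Finset.card_singleton _
    have h8 : ({c (g.q e 0), c (g.q e 1)} : Finset (Fin k)).card ≤ 2 :=
      (Finset.card_insert_le _ _).trans (by simp)
    have hZc := g.card_Z e he
    have hwe := hwt e he
    omega
  -- key fact: if x_{e,u} and q_{e,0} are b-vertices then the colors of Y_e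
  -- all appear on L_{e,v}
  have hF2 : ∀ e ∈ G.edgeFinset, ∀ u v : V, u ∈ e → v ∈ e →
      (∀ w, w ∈ e → w = u ∨ w = v) →
      IsBVertex g.H c (g.x e u) → IsBVertex g.H c (g.q e 0) →
      (g.Y e).image c ⊆ (g.L e v).image c := by
    intro e he u v hu hv hcomp hbu hbq0
    obtain ⟨injU, imgU⟩ := hxRainbow e he u hu hbu
    intro t ht
    obtain ⟨y, hy, rfl⟩ := Finset.mem_image.1 ht
    have hyN : y ∈ g.Y e ∪ g.Z e ∪ g.L e u ∪ {g.q e 0, g.q e 1} :=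
      Finset.mem_union_left _ (Finset.mem_union_left _ (Finset.mem_union_left _ hy))
    have hq0N : g.q e 0 ∈ g.Y e ∪ g.Z e ∪ g.L e u ∪ {g.q e 0, g.q e 1} :=
      Finset.mem_union_right _ (by simp)
    have hq1N : g.q e 1 ∈ g.Y e ∪ g.Z e ∪ g.L e u ∪ {g.q e 0, g.q e 1} :=
      Finset.mem_union_right _ (by simp)
    have htq0 : c y ≠ c (g.q e 0) := by
      intro hcy
      have heq : y = g.q e 0 := injU hyN hq0N hcy
      exact (Finset.disjoint_left.mp d79 (hmY e he y hy)) (heq.symm ▸ hmQ e he 0)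
    obtain ⟨b0, hadj, hb0c⟩ := hbq0 (c y) htq0
    have hb0 := hNq e he u v hu hv hcomp 0 b0 hadj
    simp only [Finset.mem_union, Finset.mem_insert, Finset.mem_singleton] at hb0
    rcases hb0 with ((hb0 | hb0) | hb0) | (hb0 | hb0 | hb0 | hb0)
    · have heq : y = b0 := injU hyN
        (Finset.mem_union_left _ (Finset.mem_union_left _ (Finset.mem_union_right _ hb0)))
        hb0c.symm
      exact absurd (heq.symm ▸ hmZ e he b0 hb0) (Finset.disjoint_left.mp d78 (hmY e he y hy))
    · have heq : y = b0 := injU hyN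
        (Finset.mem_union_left _ (Finset.mem_union_right _ hb0)) hb0c.symm
      exact absurd (heq.symm ▸ hmL e he u hu b0 hb0)
        (Finset.disjoint_right.mp d17 (hmY e he y hy))
    · exact Finset.mem_image.2 ⟨b0, hb0, hb0c⟩
    · subst hb0
      exact absurd hb0c.symm (hprop ((hNx e he u hu y).2 hyN)).symm
    · subst hb0
      have hyNv : y ∈ g.Y e ∪ g.Z e ∪ g.L e v ∪ {g.q e 0, g.q e 1} :=
        Finset.mem_union_left _ (Finset.mem_union_left _ (Finset.mem_union_left _ hy))
      exact absurd hb0c.symm (hprop ((hNx e he v hv y).2 hyNv)).symm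
    · subst hb0; exact absurd hb0c.symm htq0
    · subst hb0
      have heq : y = g.q e 1 := injU hyN hq1N hb0c.symm
      exact absurd (heq.symm ▸ hmQ e he 1) (Finset.disjoint_left.mp d79 (hmY e he y hy))
  -- choose a b-vertex for every color
  choose bv hbv1 hbv2 using hbv
  have hbvinj : Function.Injective bv := by
    intro a b hab
    rw [← hbv1 a, ← hbv1 b, hab]
  set D : Finset (Fin k) := Finset.univ.filter (fun col => bv col ∈ g.Xset ∪ g.Qset)
    with hDdef
  set BVD : Finset g.VH := D.image bv with hBVDdef
  have hBVDb : ∀ a ∈ BVD, IsBVertex g.H c a := by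
    intro a ha
    obtain ⟨col, -, rfl⟩ := Finset.mem_image.1 ha
    exact hbv2 col
  -- lower bound on |D|
  have hRsub : (Finset.univ \ D).image bv ⊆
      {g.sstar} ∪ g.Acenters ∪ Finset.univ.image g.orig := by
    intro a ha
    obtain ⟨col, hcol, rfl⟩ := Finset.mem_image.1 ha
    rw [Finset.mem_sdiff, hDdef, Finset.mem_filter] at hcol
    have hnotXQ : bv col ∉ g.Xset ∪ g.Qset := fun hmem =>
      hcol.2 ⟨Finset.mem_univ _, hmem⟩
    have hbig := hbigBV (bv col) (hbv2 col)
    rcases Finset.mem_union.1 hbig with h1 | h1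
    · rcases Finset.mem_union.1 h1 with h2 | h2
      · exact h2
      · exact absurd (Finset.mem_union_left _ h2) hnotXQ
    · exact absurd (Finset.mem_union_right _ h1) hnotXQ
  have hRcard : ({g.sstar} ∪ g.Acenters ∪ Finset.univ.image g.orig).card = 2 * W + n + 2 := by
    rw [Finset.card_union_of_disjoint (Finset.disjoint_union_left.2 ⟨d04, d24⟩),
      Finset.card_union_of_disjoint d02, Finset.card_singleton, g.card_Acenters, hOcard]
    ring
  have hDlow : 3 * m ≤ D.card := by
    have h1 : ((Finset.univ \ D).image bv).card = (Finset.univ \ D).card :=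
      Finset.card_image_of_injective _ hbvinj
    have h2 := Finset.card_le_card hRsub
    have h3 := Finset.card_sdiff_of_subset (Finset.subset_univ D)
    rw [Finset.card_univ, Fintype.card_fin] at h3
    have h4 := Finset.card_le_card (Finset.subset_univ D)
    rw [Finset.card_univ, Fintype.card_fin] at h4
    rw [h1, h3, hRcard] at h2
    omega
  -- upper bound: BVD is covered by the per-edge 4-element sets
  set T : Sym2 V → Finset g.VH :=
    fun e => ((Finset.univ.filter (fun v => v ∈ e)).image (g.x e)) ∪ {g.q e 0, g.q e 1}
    with hTdef
  have hXQsub : g.Xset ∪ g.Qset ⊆ G.edgeFinset.biUnion T := by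
    intro a ha
    rcases Finset.mem_union.1 ha with ha | ha
    · obtain ⟨e, he, ha⟩ := Finset.mem_biUnion.1 ha
      exact Finset.mem_biUnion.2 ⟨e, he, Finset.mem_union_left _ ha⟩
    · obtain ⟨e, he, ha⟩ := Finset.mem_biUnion.1 ha
      exact Finset.mem_biUnion.2 ⟨e, he, Finset.mem_union_right _ ha⟩
  have hBVDsub : BVD ⊆ G.edgeFinset.biUnion (fun e => BVD ∩ T e) := by
    intro a ha
    have haXQ : a ∈ g.Xset ∪ g.Qset := by
      obtain ⟨col, hcol, rfl⟩ := Finset.mem_image.1 ha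
      rw [hDdef, Finset.mem_filter] at hcol
      exact hcol.2
    obtain ⟨e, he, hae⟩ := Finset.mem_biUnion.1 (hXQsub haXQ)
    exact Finset.mem_biUnion.2 ⟨e, he, Finset.mem_inter.2 ⟨ha, hae⟩⟩
  have hTset : ∀ a b : V, G.Adj a b → T s(a, b) =
      {g.x s(a, b) a, g.x s(a, b) b, g.q s(a, b) 0, g.q s(a, b) 1} := by
    intro a b hab
    rw [hTdef]
    dsimp only
    rw [hfil a b, Finset.image_insert, Finset.image_singleton]
    ext z
    simp only [Finset.mem_union, Finset.mem_insert, Finset.mem_singleton]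
    tauto
  have hT3 : ∀ e ∈ G.edgeFinset, (BVD ∩ T e).card ≤ 3 ∧
      ((BVD ∩ T e).card = 3 → (g.q e 0 ∈ BVD ∧ g.q e 1 ∈ BVD) ∧
        ∀ u v : V, u ∈ e → v ∈ e → u ≠ v → (g.x e u ∈ BVD ↔ g.x e v ∉ BVD)) := by
    intro e he
    obtain ⟨a, b, hab, rfl⟩ := hend e he
    have hadj : G.Adj a b := G.mem_edgeSet.mp (SimpleGraph.mem_edgeFinset.mp he)
    have ha : a ∈ s(a, b) := Sym2.mem_mk_left a b
    have hb : b ∈ s(a, b) := Sym2.mem_mk_right a b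
    have hcomp : ∀ w, w ∈ s(a, b) → w = a ∨ w = b := fun w hw => Sym2.mem_iff.1 hw
    have hmemT : ∀ z ∈ BVD ∩ T s(a, b), z = g.x s(a, b) a ∨ z = g.x s(a, b) b ∨
        z = g.q s(a, b) 0 ∨ z = g.q s(a, b) 1 := by
      intro z hz
      have hz2 := (Finset.mem_inter.1 hz).2
      rw [hTset a b hadj] at hz2
      simp only [Finset.mem_insert, Finset.mem_singleton] at hz2
      exact hz2
    have hkey : (BVD ∩ T s(a, b)).card ≤ 3 ∧ ((BVD ∩ T s(a, b)).card = 3 →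
        (g.q s(a, b) 0 ∈ BVD ∧ g.q s(a, b) 1 ∈ BVD) ∧
        ((g.x s(a, b) a ∈ BVD ∧ g.x s(a, b) b ∉ BVD) ∨
          (g.x s(a, b) b ∈ BVD ∧ g.x s(a, b) a ∉ BVD))) := by
      by_cases hxa : g.x s(a, b) a ∈ BVD <;> by_cases hxb : g.x s(a, b) b ∈ BVD
      · -- both: the q's are not b-vertices, so |∩| ≤ 2
        have hnq : ∀ h2 : Fin 2, g.q s(a, b) h2 ∉ BVD := fun h2 hq =>
          hClaimA s(a, b) he a b ha hb hcomp (hBVDb _ hxa) (hBVDb _ hxb) h2 (hBVDb _ hq)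
        have hsub : BVD ∩ T s(a, b) ⊆ {g.x s(a, b) a, g.x s(a, b) b} := by
          intro z hz
          rcases hmemT z hz with rfl | rfl | rfl | rfl
          · exact Finset.mem_insert_self _ _
          · exact Finset.mem_insert_of_mem (Finset.mem_singleton_self _)
          · exact absurd (Finset.mem_inter.1 hz).1 (hnq 0)
          · exact absurd (Finset.mem_inter.1 hz).1 (hnq 1)
        have hc1 := Finset.card_le_card hsub
        have hc2 := Finset.card_insert_le (g.x s(a, b) a) ({g.x s(a, b) b} : Finset g.VH)
        have hc3 : ({g.x s(a, b) b} : Finset g.VH).card = 1 := Finset.card_singleton _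
        exact ⟨by omega, fun h3 => by omega⟩
      · -- only x_a
        have hsub : BVD ∩ T s(a, b) ⊆ {g.x s(a, b) a, g.q s(a, b) 0, g.q s(a, b) 1} := by
          intro z hz
          rcases hmemT z hz with rfl | rfl | rfl | rfl
          · exact Finset.mem_insert_self _ _
          · exact absurd (Finset.mem_inter.1 hz).1 hxb
          · exact Finset.mem_insert_of_mem (Finset.mem_insert_self _ _)
          · exact Finset.mem_insert_of_mem (Finset.mem_insert_of_mem
              (Finset.mem_singleton_self _))
        have hc1 := Finset.card_le_card hsub
        have hc2 := Finset.card_insert_le (g.x s(a, b) a)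
          ({g.q s(a, b) 0, g.q s(a, b) 1} : Finset g.VH)
        have hc3 := Finset.card_insert_le (g.q s(a, b) 0) ({g.q s(a, b) 1} : Finset g.VH)
        have hc4 : ({g.q s(a, b) 1} : Finset g.VH).card = 1 := Finset.card_singleton _
        refine ⟨by omega, fun h3 => ?_⟩
        have heq : BVD ∩ T s(a, b) = {g.x s(a, b) a, g.q s(a, b) 0, g.q s(a, b) 1} :=
          Finset.eq_of_subset_of_card_le hsub (by omega)
        have hq0 : g.q s(a, b) 0 ∈ BVD := by
          have h4 : g.q s(a, b) 0 ∈ BVD ∩ T s(a, b) := by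
            rw [heq]; exact Finset.mem_insert_of_mem (Finset.mem_insert_self _ _)
          exact (Finset.mem_inter.1 h4).1
        have hq1 : g.q s(a, b) 1 ∈ BVD := by
          have h4 : g.q s(a, b) 1 ∈ BVD ∩ T s(a, b) := by
            rw [heq]
            exact Finset.mem_insert_of_mem (Finset.mem_insert_of_mem
              (Finset.mem_singleton_self _))
          exact (Finset.mem_inter.1 h4).1
        exact ⟨⟨hq0, hq1⟩, Or.inl ⟨hxa, hxb⟩⟩
      · -- only x_b (symmetric)
        have hsub : BVD ∩ T s(a, b) ⊆ {g.x s(a, b) b, g.q s(a, b) 0, g.q s(a, b) 1} := by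
          intro z hz
          rcases hmemT z hz with rfl | rfl | rfl | rfl
          · exact absurd (Finset.mem_inter.1 hz).1 hxa
          · exact Finset.mem_insert_self _ _
          · exact Finset.mem_insert_of_mem (Finset.mem_insert_self _ _)
          · exact Finset.mem_insert_of_mem (Finset.mem_insert_of_mem
              (Finset.mem_singleton_self _))
        have hc1 := Finset.card_le_card hsub
        have hc2 := Finset.card_insert_le (g.x s(a, b) b)
          ({g.q s(a, b) 0, g.q s(a, b) 1} : Finset g.VH)
        have hc3 := Finset.card_insert_le (g.q s(a, b) 0) ({g.q s(a, b) 1} : Finset g.VH)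
        have hc4 : ({g.q s(a, b) 1} : Finset g.VH).card = 1 := Finset.card_singleton _
        refine ⟨by omega, fun h3 => ?_⟩
        have heq : BVD ∩ T s(a, b) = {g.x s(a, b) b, g.q s(a, b) 0, g.q s(a, b) 1} :=
          Finset.eq_of_subset_of_card_le hsub (by omega)
        have hq0 : g.q s(a, b) 0 ∈ BVD := by
          have h4 : g.q s(a, b) 0 ∈ BVD ∩ T s(a, b) := by
            rw [heq]; exact Finset.mem_insert_of_mem (Finset.mem_insert_self _ _)
          exact (Finset.mem_inter.1 h4).1
        have hq1 : g.q s(a, b) 1 ∈ BVD := by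
          have h4 : g.q s(a, b) 1 ∈ BVD ∩ T s(a, b) := by
            rw [heq]
            exact Finset.mem_insert_of_mem (Finset.mem_insert_of_mem
              (Finset.mem_singleton_self _))
          exact (Finset.mem_inter.1 h4).1
        exact ⟨⟨hq0, hq1⟩, Or.inr ⟨hxb, hxa⟩⟩
      · -- neither
        have hsub : BVD ∩ T s(a, b) ⊆ {g.q s(a, b) 0, g.q s(a, b) 1} := by
          intro z hz
          rcases hmemT z hz with rfl | rfl | rfl | rfl
          · exact absurd (Finset.mem_inter.1 hz).1 hxa
          · exact absurd (Finset.mem_inter.1 hz).1 hxb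
          · exact Finset.mem_insert_self _ _
          · exact Finset.mem_insert_of_mem (Finset.mem_singleton_self _)
        have hc1 := Finset.card_le_card hsub
        have hc2 := Finset.card_insert_le (g.q s(a, b) 0) ({g.q s(a, b) 1} : Finset g.VH)
        have hc3 : ({g.q s(a, b) 1} : Finset g.VH).card = 1 := Finset.card_singleton _
        exact ⟨by omega, fun h3 => by omega⟩
    refine ⟨hkey.1, fun h3 => ?_⟩
    obtain ⟨hqs, hdisj⟩ := hkey.2 h3
    refine ⟨hqs, ?_⟩
    intro u v hu' hv' hne'
    rcases hcomp u hu' with rfl | rfl <;> rcases hcomp v hv' with rfl | rfl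
    · exact absurd rfl hne'
    · constructor
      · intro h5
        rcases hdisj with ⟨-, h6⟩ | ⟨-, h6⟩
        · exact h6
        · exact absurd h5 h6
      · intro h5
        rcases hdisj with ⟨h6, -⟩ | ⟨h6, -⟩
        · exact h6
        · exact absurd h6 h5
    · constructor
      · intro h5
        rcases hdisj with ⟨-, h6⟩ | ⟨-, h6⟩
        · exact absurd h5 h6
        · exact h6
      · intro h5
        rcases hdisj with ⟨h6, -⟩ | ⟨h6, -⟩
        · exact absurd h6 h5
        · exact h6
    · exact absurd rfl hne'
  -- the per-edge counts are all exactly 3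
  have hBVDcard : BVD.card = D.card := Finset.card_image_of_injective _ hbvinj
  have hsumT : BVD.card ≤ ∑ e ∈ G.edgeFinset, (BVD ∩ T e).card :=
    (Finset.card_le_card hBVDsub).trans Finset.card_biUnion_le
  have hTeq : ∀ e ∈ G.edgeFinset, (BVD ∩ T e).card = 3 := by
    intro e he
    by_contra hlt
    have hlt' : (BVD ∩ T e).card < 3 := lt_of_le_of_ne (hT3 e he).1 hlt
    have hstrict : ∑ e ∈ G.edgeFinset, (BVD ∩ T e).card < ∑ e ∈ G.edgeFinset, 3 :=
      Finset.sum_lt_sum (fun i hi => (hT3 i hi).1) ⟨e, he, hlt'⟩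
    rw [Finset.sum_const, smul_eq_mul] at hstrict
    omega
  have hedgeStruct : ∀ e ∈ G.edgeFinset, (g.q e 0 ∈ BVD ∧ g.q e 1 ∈ BVD) ∧
      ∀ u v : V, u ∈ e → v ∈ e → u ≠ v → (g.x e u ∈ BVD ↔ g.x e v ∉ BVD) :=
    fun e he => (hT3 e he).2 (hTeq e he)
  -- the orientation
  set o : Sym2 V → V :=
    fun e => if hex : ∃ w, w ∈ e ∧ g.x e w ∈ BVD then hex.choose else Classical.arbitrary V
    with hodef
  have hoin : ∀ e ∈ G.edgeFinset, o e ∈ e ∧ g.x e (o e) ∈ BVD := by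
    intro e he
    have hex : ∃ w, w ∈ e ∧ g.x e w ∈ BVD := by
      obtain ⟨a, b, hab, rfl⟩ := hend e he
      have ha : a ∈ s(a, b) := Sym2.mem_mk_left a b
      have hb : b ∈ s(a, b) := Sym2.mem_mk_right a b
      by_cases hxa : g.x s(a, b) a ∈ BVD
      · exact ⟨a, ha, hxa⟩
      · refine ⟨b, hb, ?_⟩
        by_contra hxb
        exact hxa ((((hedgeStruct s(a, b) he).2 a b ha hb hab)).2 hxb)
    rw [hodef]
    dsimp only
    rw [dif_pos hex]
    exact ⟨hex.choose_spec.1, hex.choose_spec.2⟩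
  have horient : ∀ e ∈ G.edgeFinset, ∀ w, w ∈ e → (g.x e w ∈ BVD ↔ o e = w) := by
    intro e he w hw
    obtain ⟨hin, hbvd⟩ := hoin e he
    constructor
    · intro hxw
      by_contra hne2
      have hiff := (hedgeStruct e he).2 w (o e) hw hin (fun heq => hne2 heq.symm)
      exact (hiff.1 hxw) hbvd
    · intro heq
      exact heq ▸ hbvd
  -- every original vertex is a b-vertex
  have hDup : D.card ≤ 3 * m := by
    have h1 : ∑ e ∈ G.edgeFinset, (BVD ∩ T e).card = 3 * m := by
      rw [Finset.sum_congr rfl hTeq, Finset.sum_const, smul_eq_mul]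
      ring
    omega
  have hRimg : (Finset.univ \ D).image bv =
      {g.sstar} ∪ g.Acenters ∪ Finset.univ.image g.orig := by
    refine Finset.eq_of_subset_of_card_le hRsub ?_
    have h1 : ((Finset.univ \ D).image bv).card = (Finset.univ \ D).card :=
      Finset.card_image_of_injective _ hbvinj
    have h3 := Finset.card_sdiff_of_subset (Finset.subset_univ D)
    rw [Finset.card_univ, Fintype.card_fin] at h3
    omega
  have hborig : ∀ v : V, IsBVertex g.H c (g.orig v) := by
    intro v
    have hmem : g.orig v ∈ (Finset.univ \ D).image bv := by
      rw [hRimg]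
      exact Finset.mem_union_right _ (hmO v)
    obtain ⟨col, -, heq⟩ := Finset.mem_image.1 hmem
    exact heq ▸ hbv2 col
  -- per-vertex bound: twice the outgoing weight is at most the vertex weight
  have hvert : ∀ v : V,
      2 * (∑ e ∈ (G.edgeFinset.filter (fun e => v ∈ e)).filter (fun e => ¬ (o e = v)), wt e)
        ≤ vertW G wt v := by
    intro v
    set Ev := G.edgeFinset.filter (fun e => v ∈ e) with hEv
    have hvW : vertW G wt v = ∑ e ∈ Ev, wt e := by rw [hEv]; rfl
    have hcb : ∀ e ∈ Ev, ((g.L e v ∪ g.Y e).image c).card ≤ 2 * wt e ∧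
        (¬ (o e = v) → ((g.L e v ∪ g.Y e).image c).card ≤ wt e) := by
      intro e heEv
      rw [hEv, Finset.mem_filter] at heEv
      obtain ⟨he, hv⟩ := heEv
      have hLc := g.card_L e he v hv
      have hYc := g.card_Y e he
      constructor
      · have h1 := Finset.card_image_le (s := g.L e v ∪ g.Y e) (f := c)
        have h2 := Finset.card_union_le (g.L e v) (g.Y e)
        omega
      · intro hne2
        obtain ⟨hin, hbvd⟩ := hoin e he
        have hq0 : g.q e 0 ∈ BVD := (hedgeStruct e he).1.1
        have hcomp : ∀ w, w ∈ e → w = o e ∨ w = v := by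
          obtain ⟨a, b, hab, rfl⟩ := hend e he
          intro w hw
          rcases Sym2.mem_iff.1 hw with rfl | rfl
          · rcases Sym2.mem_iff.1 hin with h | h
            · exact Or.inl h.symm
            · rcases Sym2.mem_iff.1 hv with h2 | h2
              · exact Or.inr h2.symm
              · exact absurd (h.trans h2.symm) hne2
          · rcases Sym2.mem_iff.1 hin with h | h
            · rcases Sym2.mem_iff.1 hv with h2 | h2
              · exact absurd (h.trans h2.symm) hne2
              · exact Or.inr h2.symm
            · exact Or.inl h.symm
        have hsubY := hF2 e he (o e) v hin hv hcomp (hBVDb _ hbvd) (hBVDb _ hq0)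
        have h1 : (g.L e v ∪ g.Y e).image c ⊆ (g.L e v).image c := by
          rw [Finset.image_union]
          exact Finset.union_subset Finset.Subset.rfl hsubY
        have h2 := Finset.card_le_card h1
        have h3 := Finset.card_image_le (s := g.L e v) (f := c)
        omega
    have herase : Finset.univ.erase (c (g.orig v)) ⊆
        ((g.P v).image c) ∪ Ev.biUnion (fun e => (g.L e v ∪ g.Y e).image c) := by
      intro t ht2
      have h0 := bvertex_subset_colors (hborig v) (fun b hb2 => hNo v b hb2) ht2
      rwa [Finset.image_union, Finset.biUnion_image] at h0
    have hcard1 : k - 1 ≤ (g.P v).card + ∑ e ∈ Ev, ((g.L e v ∪ g.Y e).image c).card := by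
      have h1 := Finset.card_le_card herase
      rw [Finset.card_erase_of_mem (Finset.mem_univ _), Finset.card_univ,
        Fintype.card_fin] at h1
      have h2 := Finset.card_union_le ((g.P v).image c)
        (Ev.biUnion fun e => (g.L e v ∪ g.Y e).image c)
      have h3 := Finset.card_biUnion_le (s := Ev)
        (t := fun e => (g.L e v ∪ g.Y e).image c)
      have h4 := Finset.card_image_le (s := g.P v) (f := c)
      omega
    have hsplit : ∑ e ∈ Ev, ((g.L e v ∪ g.Y e).image c).card
        + ∑ e ∈ Ev.filter (fun e => ¬ (o e = v)), wt e ≤ 2 * vertW G wt v := by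
      have h1 : ∑ e ∈ Ev, ((g.L e v ∪ g.Y e).image c).card
          + ∑ e ∈ Ev.filter (fun e => ¬ (o e = v)), wt e
          = ∑ e ∈ Ev, (((g.L e v ∪ g.Y e).image c).card
            + if ¬ (o e = v) then wt e else 0) := by
        rw [Finset.sum_add_distrib, Finset.sum_filter (fun e => ¬ (o e = v)) wt]
      rw [h1, hvW, Finset.mul_sum]
      refine Finset.sum_le_sum fun e heEv => ?_
      by_cases hoe : o e = v
      · rw [if_neg (by simpa using hoe)]
        have := (hcb e heEv).1
        omega
      · rw [if_pos hoe]
        have := (hcb e heEv).2 hoe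
        omega
    have hPc := g.card_P v
    omega
  -- global sums
  have hsum2 : ∑ v : V, vertW G wt v = 2 * W := by
    have h1 : ∀ v : V, vertW G wt v = ∑ e ∈ G.edgeFinset, if v ∈ e then wt e else 0 :=
      fun v => Finset.sum_filter _ _
    calc ∑ v : V, vertW G wt v
        = ∑ v : V, ∑ e ∈ G.edgeFinset, if v ∈ e then wt e else 0 :=
          Finset.sum_congr rfl fun v _ => h1 v
      _ = ∑ e ∈ G.edgeFinset, ∑ v : V, if v ∈ e then wt e else 0 := Finset.sum_comm
      _ = ∑ e ∈ G.edgeFinset, 2 * wt e := by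
          refine Finset.sum_congr rfl fun e he => ?_
          rw [← Finset.sum_filter, Finset.sum_const, smul_eq_mul, hfil2 e he]
      _ = 2 * W := by rw [← Finset.mul_sum]; rfl
  have hsum1 : ∑ v : V,
      (∑ e ∈ (G.edgeFinset.filter (fun e => v ∈ e)).filter (fun e => ¬ (o e = v)), wt e)
      = W := by
    have h1 : ∀ v : V,
        ∑ e ∈ (G.edgeFinset.filter (fun e => v ∈ e)).filter (fun e => ¬ (o e = v)), wt e
        = ∑ e ∈ G.edgeFinset, if v ∈ e ∧ ¬ (o e = v) then wt e else 0 := by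
      intro v
      rw [Finset.filter_filter, Finset.sum_filter]
    calc ∑ v : V,
        (∑ e ∈ (G.edgeFinset.filter (fun e => v ∈ e)).filter (fun e => ¬ (o e = v)), wt e)
        = ∑ v : V, ∑ e ∈ G.edgeFinset, if v ∈ e ∧ ¬ (o e = v) then wt e else 0 :=
          Finset.sum_congr rfl fun v _ => h1 v
      _ = ∑ e ∈ G.edgeFinset, ∑ v : V, if v ∈ e ∧ ¬ (o e = v) then wt e else 0 :=
          Finset.sum_comm
      _ = ∑ e ∈ G.edgeFinset, wt e := by
          refine Finset.sum_congr rfl fun e he => ?_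
          obtain ⟨a, b, hab, rfl⟩ := hend e he
          rw [← Finset.sum_filter]
          have hoine := (hoin s(a, b) he).1
          rcases Sym2.mem_iff.1 hoine with h | h
          · have heq2 : Finset.univ.filter
                (fun w => w ∈ s(a, b) ∧ ¬ (o s(a, b) = w)) = {b} := by
              ext z
              simp only [Finset.mem_filter, Finset.mem_univ, true_and, Sym2.mem_iff,
                Finset.mem_singleton, h]
              constructor
              · rintro ⟨rfl | rfl, hne3⟩
                · exact absurd rfl hne3
                · rfl
              · rintro rfl
                exact ⟨Or.inr rfl, fun hE2 => hab hE2⟩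
            rw [heq2, Finset.sum_singleton]
          · have heq2 : Finset.univ.filter
                (fun w => w ∈ s(a, b) ∧ ¬ (o s(a, b) = w)) = {a} := by
              ext z
              simp only [Finset.mem_filter, Finset.mem_univ, true_and, Sym2.mem_iff,
                Finset.mem_singleton, h]
              constructor
              · rintro ⟨rfl | rfl, hne3⟩
                · rfl
                · exact absurd rfl hne3
              · rintro rfl
                exact ⟨Or.inl rfl, fun hE2 => hab hE2.symm⟩
            rw [heq2, Finset.sum_singleton]
      _ = W := rfl
  -- conclusion
  have hall := (Finset.sum_eq_sum_iff_of_le (s := (Finset.univ : Finset V))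
    (f := fun v => 2 * (∑ e ∈ (G.edgeFinset.filter (fun e => v ∈ e)).filter
      (fun e => ¬ (o e = v)), wt e))
    (g := fun v => vertW G wt v) (fun i _ => hvert i)).1
    (by rw [hsum2, ← Finset.mul_sum, hsum1])
  refine ⟨o, fun e he => (hoin e he).1, fun v => ?_⟩
  have heq2 := hall v (Finset.mem_univ v)
  have hsplit2 : ∑ e ∈ (G.edgeFinset.filter (fun e => v ∈ e)).filter (fun e => o e = v), wt e
      + ∑ e ∈ (G.edgeFinset.filter (fun e => v ∈ e)).filter (fun e => ¬ (o e = v)), wt e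
      = vertW G wt v :=
    Finset.sum_filter_add_sum_filter_not _ _ _
  have hgoal1 : G.edgeFinset.filter (fun e => v ∈ e ∧ o e = v)
      = (G.edgeFinset.filter (fun e => v ∈ e)).filter (fun e => o e = v) := by
    rw [Finset.filter_filter]
  have hgoal2 : G.edgeFinset.filter (fun e => v ∈ e ∧ o e ≠ v)
      = (G.edgeFinset.filter (fun e => v ∈ e)).filter (fun e => ¬ (o e = v)) := by
    rw [Finset.filter_filter]
  rw [hgoal1, hgoal2]
  omega
end
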